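/- arXiv:0705.0422 — 4 statements merged into one kernel-verified Lean document; each statement's English description precedes it below -/
import Mathlib

section
/- For any finite simple graph G and any integer k ≥ 1, the k-frugal chromatic number satisfies χ_k(G) ≤ ⌈λ_{k,1}(G)/k⌉. -/
open SimpleGraph

/-- A `k`-frugal colouring: a proper vertex colouring in which no colour appears more than
`k` times in the neighbourhood of any vertex. -/
def SimpleGraph.IsFrugalColoring {V α : Type*} (G : SimpleGraph V) (k : ℕ) (c : V → α) : Prop :=
  (∀ u v, G.Adj u v → c u ≠ c v) ∧
  ∀ (v : V) (a : α), {u | u ∈ G.neighborSet v ∧ c u = a}.ncard ≤ k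

/-- The `k`-frugal chromatic number `χ_k(G)`: the least number of colours in a `k`-frugal
colouring of `G`. -/
noncomputable def SimpleGraph.frugalChromaticNumber {V : Type*} (G : SimpleGraph V) (k : ℕ) : ℕ :=
  sInf {n : ℕ | ∃ c : V → ℕ, (∀ v, c v < n) ∧ G.IsFrugalColoring k c}

/-- An `L(p,q)`-labelling: labels of adjacent vertices differ by at least `p`, and labels
of vertices at distance exactly two differ by at least `q`. -/
def SimpleGraph.IsLpqLabelling {V : Type*} (G : SimpleGraph V) (p q : ℕ) (f : V → ℤ) : Prop :=
  (∀ u v, G.Adj u v → (p : ℤ) ≤ |f u - f v|) ∧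
  (∀ u v, u ≠ v → ¬ G.Adj u v → (∃ w, G.Adj u w ∧ G.Adj w v) → (q : ℤ) ≤ |f u - f v|)

/-- `λ_{p,q}(G)`: the least `t` such that `G` has an `L(p,q)`-labelling with labels
in `{1, …, t}`. -/
noncomputable def SimpleGraph.lambdaNumber {V : Type*} (G : SimpleGraph V) (p q : ℕ) : ℕ :=
  sInf {t : ℕ | ∃ f : V → ℤ, G.IsLpqLabelling p q f ∧ ∀ v, f v ∈ Finset.Icc (1 : ℤ) (t : ℤ)}

/-- For any finite simple graph `G` and `k ≥ 1`, `χ_k(G) ≤ ⌈λ_{k,1}(G)/k⌉`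
(the ceiling `⌈a/k⌉` is written `(a + k - 1)/k` in natural-number arithmetic). -/
theorem frugalChromaticNumber_le_ceil_lambda {V : Type*} [Fintype V] (G : SimpleGraph V)
    (k : ℕ) (hk : 1 ≤ k) :
    G.frugalChromaticNumber k ≤ (G.lambdaNumber k 1 + k - 1) / k := by
  classical
  set t := G.lambdaNumber k 1 with ht
  -- the defining set of the lambda number is nonempty
  have hne : {t : ℕ | ∃ f : V → ℤ, G.IsLpqLabelling k 1 f ∧
      ∀ v, f v ∈ Finset.Icc (1 : ℤ) (t : ℤ)}.Nonempty := by
    obtain ⟨e⟩ := (Fintype.truncEquivFin V)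
    refine ⟨k * Fintype.card V, fun v => (k : ℤ) * ((e v : ℕ) + 1), ?_, ?_⟩
    · have hdiff : ∀ u v : V, u ≠ v → (k : ℤ) ≤ |(k : ℤ) * ((e u : ℕ) + 1) - k * ((e v : ℕ) + 1)| := by
        intro u v huv
        have hne' : (e u : ℕ) ≠ (e v : ℕ) := by
          intro h
          exact huv (e.injective (Fin.ext h))
        have heq : (k : ℤ) * ((e u : ℕ) + 1) - k * ((e v : ℕ) + 1) =
            (k : ℤ) * (((e u : ℕ) : ℤ) - ((e v : ℕ) : ℤ)) := by ring
        rw [heq, abs_mul, abs_of_nonneg (by positivity : (0:ℤ) ≤ (k:ℤ))]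
        have h1 : (1 : ℤ) ≤ |((e u : ℕ) : ℤ) - ((e v : ℕ) : ℤ)| := by
          have hne2 : ((e u : ℕ) : ℤ) ≠ ((e v : ℕ) : ℤ) := by exact_mod_cast hne'
          rcases abs_cases (((e u : ℕ) : ℤ) - ((e v : ℕ) : ℤ)) with ⟨h, _⟩ | ⟨h, _⟩ <;> omega
        nlinarith [abs_nonneg (((e u : ℕ) : ℤ) - ((e v : ℕ) : ℤ))]
      constructor
      · intro u v huv
        exact hdiff u v (G.ne_of_adj huv)
      · intro u v huv _ _
        calc (1 : ℤ) ≤ (k : ℤ) := by exact_mod_cast hk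
          _ ≤ _ := hdiff u v huv
    · intro v
      simp only [Finset.mem_Icc]
      constructor
      · have : (1 : ℤ) ≤ (k : ℤ) := by exact_mod_cast hk
        nlinarith [Int.ofNat_nonneg (e v : ℕ)]
      · have h1 : ((e v : ℕ) : ℤ) + 1 ≤ (Fintype.card V : ℤ) := by
          have := (e v).isLt
          omega
        push_cast
        nlinarith [Int.ofNat_nonneg (k : ℕ)]
  obtain ⟨f, hf, hbound'⟩ := Nat.sInf_mem hne
  have hbound : ∀ v, f v ∈ Finset.Icc (1 : ℤ) (t : ℤ) := hbound'
  have hk0 : (0 : ℤ) < (k : ℤ) := by exact_mod_cast hk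
  -- the colouring
  set c : V → ℕ := fun v => ((f v - 1) / k).toNat with hc
  have hfv : ∀ v, 1 ≤ f v ∧ f v ≤ (t : ℤ) := by
    intro v
    have := hbound v
    simpa [Finset.mem_Icc] using this
  -- key interval bounds
  have key : ∀ u, (k : ℤ) * (c u) + 1 ≤ f u ∧ f u ≤ (k : ℤ) * (c u) + k := by
    intro u
    have h1 : (1 : ℤ) ≤ f u := (hfv u).1
    have hq : (0 : ℤ) ≤ (f u - 1) / k := Int.ediv_nonneg (by omega) (le_of_lt hk0)
    have hcq : ((c u : ℕ) : ℤ) = (f u - 1) / k := by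
      simp [hc, Int.toNat_of_nonneg hq]
    have hdiv := Int.mul_ediv_add_emod (f u - 1) (k : ℤ)
    have hml := Int.emod_lt_of_pos (f u - 1) hk0
    have hmn := Int.emod_nonneg (f u - 1) (by omega : (k:ℤ) ≠ 0)
    constructor <;> [skip; skip] <;> rw [hcq] <;> omega
  -- properness
  have hproper : ∀ u v, G.Adj u v → c u ≠ c v := by
    intro u v hadj hcc
    have h1 := hf.1 u v hadj
    have k1 := key u
    have k2 := key v
    rw [hcc] at k1
    rcases abs_cases (f u - f v) with ⟨h, _⟩ | ⟨h, _⟩ <;> omega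
  -- distinct neighbours get distinct labels
  have hinj : ∀ v u w, u ∈ G.neighborSet v → w ∈ G.neighborSet v → f u = f w → u = w := by
    intro v u w hu hw hfe
    by_contra hne'
    have : (1 : ℤ) ≤ |f u - f w| := by
      by_cases hadj : G.Adj u w
      · calc (1 : ℤ) ≤ (k : ℤ) := by exact_mod_cast hk
          _ ≤ _ := hf.1 u w hadj
      · exact hf.2 u w hne' hadj ⟨v, (G.mem_neighborSet v u).1 hu |>.symm,
          (G.mem_neighborSet v w).1 hw⟩
    rw [hfe] at this
    simp at this
  -- frugality
  have hfrugal : ∀ (v : V) (a : ℕ), {u | u ∈ G.neighborSet v ∧ c u = a}.ncard ≤ k := by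
    intro v a
    set S := {u | u ∈ G.neighborSet v ∧ c u = a} with hS
    have hinjOn : Set.InjOn f S := by
      intro u hu w hw hfe
      exact hinj v u w hu.1 hw.1 hfe
    have himg : f '' S ⊆ (Finset.Icc ((k : ℤ) * a + 1) ((k : ℤ) * a + k) : Finset ℤ) := by
      rintro x ⟨u, hu, rfl⟩
      have := key u
      rw [hu.2] at this
      simp only [Finset.coe_Icc, Set.mem_Icc]
      omega
    calc S.ncard = (f '' S).ncard := (Set.ncard_image_of_injOn hinjOn).symm
      _ ≤ ((Finset.Icc ((k : ℤ) * a + 1) ((k : ℤ) * a + k) : Finset ℤ) : Set ℤ).ncard :=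
          Set.ncard_le_ncard himg (Finset.finite_toSet _)
      _ = (Finset.Icc ((k : ℤ) * a + 1) ((k : ℤ) * a + k)).card := Set.ncard_coe_finset _
      _ = k := by rw [Int.card_Icc]; omega
  -- colours are below the ceiling
  have hlt : ∀ v, c v < (t + k - 1) / k := by
    intro v
    have k1 := (key v).1
    have k2 := (hfv v).2
    have hkc : k * c v + 1 ≤ t := by
      have : (k : ℤ) * (c v) + 1 ≤ (t : ℤ) := le_trans k1 k2
      exact_mod_cast this
    have h2 : (c v + 1) * k ≤ t + k - 1 := by
      have h3 : (c v + 1) * k = k * c v + k := by ring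
      omega
    exact lt_of_lt_of_le (Nat.lt_succ_self _) ((Nat.le_div_iff_mul_le (by omega : 0 < k)).2 h2)
  exact Nat.sInf_le ⟨c, hlt, hproper, hfrugal⟩
end

section
/- For any finite simple graph G and any integer k ≥ 1, the k-frugal choice number satisfies ch_k(G) ≤ ⌈λ^l_{k,1}(G)/k⌉. -/
open SimpleGraph

/-- The `k`-frugal choice number `ch_k(G)`: the least `t` such that any assignment of lists
of `t` integers to the vertices admits a `k`-frugal colouring from the lists. -/
noncomputable def SimpleGraph.frugalChoiceNumber {V : Type*} (G : SimpleGraph V) (k : ℕ) : ℕ :=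
  sInf {t : ℕ | ∀ L : V → Finset ℤ, (∀ v, (L v).card = t) →
    ∃ c : V → ℤ, (∀ v, c v ∈ L v) ∧ G.IsFrugalColoring k c}

/-- The list version `λ^l_{p,q}(G)`: the least `t` such that for every assignment of lists
of `t` integers to the vertices there is an `L(p,q)`-labelling from the lists. -/
noncomputable def SimpleGraph.lambdaListNumber {V : Type*} (G : SimpleGraph V) (p q : ℕ) : ℕ :=
  sInf {t : ℕ | ∀ L : V → Finset ℤ, (∀ v, (L v).card = t) →
    ∃ f : V → ℤ, G.IsLpqLabelling p q f ∧ ∀ v, f v ∈ L v}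

noncomputable def greedyAux (k : ℕ) (M : ℕ → Finset ℤ) : ℕ → ℤ
  | i =>
    let prev : Finset ℤ := (Finset.range i).attach.image fun j => greedyAux k M j.1
    if h : (M i \ prev.biUnion fun x => Finset.Icc (x - k + 1) (x + k - 1)).Nonempty
    then h.choose else 0
termination_by i => i
decreasing_by exact Finset.mem_range.mp j.2

theorem greedyAux_spec (k : ℕ) (hk : 1 ≤ k) (M : ℕ → Finset ℤ) (i : ℕ)
    (h : 2 * k * i < (M i).card) :
    greedyAux k M i ∈ M i ∧
      ∀ j < i, greedyAux k M i ∉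
        Finset.Icc (greedyAux k M j - k + 1) (greedyAux k M j + k - 1) := by
  set prev : Finset ℤ := (Finset.range i).attach.image fun j => greedyAux k M j.1 with hprev
  have hcard : (prev.biUnion fun x => Finset.Icc (x - k + 1) (x + k - 1)).card < (M i).card := by
    calc (prev.biUnion fun x => Finset.Icc (x - k + 1) (x + k - 1)).card
        ≤ ∑ x ∈ prev, (Finset.Icc (x - (k:ℤ) + 1) (x + k - 1)).card := Finset.card_biUnion_le
      _ ≤ ∑ _x ∈ prev, (2 * k - 1) := by
          refine Finset.sum_le_sum fun x _ => ?_
          rw [Int.card_Icc]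
          have : (x + k - 1 + 1 - (x - k + 1) : ℤ) = 2 * k - 1 := by ring
          rw [this]
          omega
      _ = prev.card * (2 * k - 1) := by rw [Finset.sum_const, smul_eq_mul]
      _ ≤ i * (2 * k - 1) := by
          have : prev.card ≤ i := by
            calc prev.card ≤ (Finset.range i).attach.card := Finset.card_image_le
              _ = i := by simp
          exact Nat.mul_le_mul_right _ this
      _ < (M i).card := by
          have h1 : i * (2 * k - 1) ≤ i * (2 * k) := Nat.mul_le_mul_left _ (by omega)
          have h2 : i * (2 * k) = 2 * k * i := Nat.mul_comm _ _
          omega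
  have hne : (M i \ prev.biUnion fun x => Finset.Icc (x - k + 1) (x + k - 1)).Nonempty := by
    rw [← Finset.card_pos]
    have := Finset.le_card_sdiff (prev.biUnion fun x => Finset.Icc (x - k + 1) (x + k - 1)) (M i)
    omega
  have heq : greedyAux k M i = hne.choose := by
    rw [greedyAux]
    simp only [← hprev, dif_pos hne]
  have hmem := hne.choose_spec
  rw [Finset.mem_sdiff] at hmem
  rw [heq]
  refine ⟨hmem.1, fun j hj hcon => ?_⟩
  exact hmem.2 (Finset.mem_biUnion.mpr ⟨greedyAux k M j,
    Finset.mem_image.mpr ⟨⟨j, Finset.mem_range.mpr hj⟩, Finset.mem_attach _ _, rfl⟩, hcon⟩)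

theorem lambda_set_nonempty {V : Type*} [Fintype V] (G : SimpleGraph V) (k : ℕ) (hk : 1 ≤ k) :
    {t : ℕ | ∀ L : V → Finset ℤ, (∀ v, (L v).card = t) →
      ∃ f : V → ℤ, G.IsLpqLabelling k 1 f ∧ ∀ v, f v ∈ L v}.Nonempty := by
  classical
  set n := Fintype.card V with hn
  refine ⟨2 * k * n + 1, fun L hL => ?_⟩
  set e := Fintype.equivFin V with he
  set M : ℕ → Finset ℤ := fun i => if h : i < n then L (e.symm ⟨i, h⟩) else Finset.range (2*k*n+1) |>.image Int.ofNat with hM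
  have hMc : ∀ i, (M i).card = 2 * k * n + 1 := by
    intro i
    by_cases h : i < n
    · simp [hM, h, hL]
    · simp only [hM, dif_neg h]
      rw [Finset.card_image_of_injective _ (fun a b => Int.ofNat.inj)]
      simp
  have hspec : ∀ v : V, greedyAux k M (e v) ∈ M (e v) ∧
      ∀ j < (e v : ℕ), greedyAux k M (e v) ∉
        Finset.Icc (greedyAux k M j - k + 1) (greedyAux k M j + k - 1) := by
    intro v
    refine greedyAux_spec k hk M (e v) ?_
    rw [hMc]
    have : (e v : ℕ) < n := (e v).2
    nlinarith
  set f : V → ℤ := fun v => greedyAux k M (e v) with hf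
  have key : ∀ u v : V, u ≠ v → (k : ℤ) ≤ |f u - f v| := by
    intro u v huv
    have hne : (e u : ℕ) ≠ (e v : ℕ) := by
      intro hc
      exact huv (e.injective (Fin.ext hc))
    rcases lt_or_gt_of_ne hne with h | h
    · have := (hspec v).2 _ h
      rw [Finset.mem_Icc] at this
      rw [abs_sub_comm]
      rcases abs_cases (f v - f u) with ⟨h1, _⟩ | ⟨h1, _⟩ <;> simp only [hf] at * <;> omega
    · have := (hspec u).2 _ h
      rw [Finset.mem_Icc] at this
      rcases abs_cases (f u - f v) with ⟨h1, _⟩ | ⟨h1, _⟩ <;> simp only [hf] at * <;> omega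
  refine ⟨f, ⟨fun u v huv => key u v (G.ne_of_adj huv), fun u v huv _ _ => ?_⟩, fun v => ?_⟩
  · exact le_trans (by exact_mod_cast hk) (key u v huv)
  · have := (hspec v).1
    have h2 : (e v : ℕ) < n := (e v).2
    simp only [hM, dif_pos h2] at this
    simpa using this

/-- For any finite simple graph `G` and `k ≥ 1`, `ch_k(G) ≤ ⌈λ^l_{k,1}(G)/k⌉`
(the ceiling `⌈a/k⌉` is written `(a + k - 1)/k` in natural-number arithmetic). -/
theorem frugalChoiceNumber_le_ceil_lambdaList {V : Type*} [Fintype V] (G : SimpleGraph V)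
    (k : ℕ) (hk : 1 ≤ k) :
    G.frugalChoiceNumber k ≤ (G.lambdaListNumber k 1 + k - 1) / k := by
  classical
  have hk' : (0 : ℤ) < (k : ℤ) := by exact_mod_cast hk
  set lam := G.lambdaListNumber k 1 with hlam
  have hmem : lam ∈ {t : ℕ | ∀ L : V → Finset ℤ, (∀ v, (L v).card = t) →
      ∃ f : V → ℤ, G.IsLpqLabelling k 1 f ∧ ∀ v, f v ∈ L v} :=
    Nat.sInf_mem (lambda_set_nonempty G k hk)
  have hkt : lam ≤ ((lam + k - 1) / k) * k := by
    have h1 := Nat.div_add_mod (lam + k - 1) k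
    have h2 : (lam + k - 1) % k < k := Nat.mod_lt _ hk
    have h3 : k * ((lam + k - 1) / k) = ((lam + k - 1) / k) * k := Nat.mul_comm _ _
    omega
  rw [SimpleGraph.frugalChoiceNumber]
  refine Nat.sInf_le ?_
  intro L hL
  -- blow up lists
  set B : V → Finset ℤ := fun v => (L v).biUnion fun x =>
    (Finset.range k).image (fun i : ℕ => (k : ℤ) * x + (i : ℤ)) with hB
  have hBc : ∀ v, (B v).card = ((lam + k - 1) / k) * k := by
    intro v
    rw [hB]
    rw [Finset.card_biUnion]
    · rw [Finset.sum_congr rfl (fun x _ => ?_), Finset.sum_const, hL, smul_eq_mul]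
      · rw [Finset.card_image_of_injective _ (fun a b hab => by
          simp only at hab; omega : Function.Injective fun i : ℕ => (k : ℤ) * x + (i : ℤ))]
        exact Finset.card_range k
    · intro x _ y _ hxy
      rw [Function.onFun, Finset.disjoint_left]
      intro z hz hz'
      simp only [Finset.mem_image, Finset.mem_range] at hz hz'
      obtain ⟨i, hi, rfl⟩ := hz
      obtain ⟨j, hj, hj'⟩ := hz'
      apply hxy
      have hd : (k : ℤ) * (x - y) = (j : ℤ) - i := by linear_combination -hj'
      have hi' : (i : ℤ) < k := by exact_mod_cast hi
      have hj'' : (j : ℤ) < k := by exact_mod_cast hj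
      have hi0 : (0 : ℤ) ≤ i := Int.ofNat_nonneg i
      have hj0 : (0 : ℤ) ≤ j := Int.ofNat_nonneg j
      rcases lt_trichotomy x y with h | h | h
      · exfalso
        have := mul_le_mul_of_nonneg_left (show x - y ≤ -1 by omega) (le_of_lt hk')
        linarith
      · exact h
      · exfalso
        have := mul_le_mul_of_nonneg_left (show (1 : ℤ) ≤ x - y by omega) (le_of_lt hk')
        linarith
  have hsub : ∀ v, ∃ s ⊆ B v, s.card = lam := fun v =>
    Finset.exists_subset_card_eq (s := B v) (n := lam) (by rw [hBc]; exact hkt)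
  choose L' hL'sub hL'card using hsub
  obtain ⟨f, hfl, hfL⟩ := hmem L' hL'card
  -- the colouring
  set c : V → ℤ := fun v => f v / k with hc
  have hmodlo : ∀ v, (0 : ℤ) ≤ f v % k := fun v => Int.emod_nonneg _ (by omega)
  have hmodhi : ∀ v, f v % k < k := fun v => Int.emod_lt_of_pos _ hk'
  have hdm : ∀ v, (k : ℤ) * (f v / k) + f v % k = f v := fun v => Int.mul_ediv_add_emod _ _
  have hcL : ∀ v, c v ∈ L v := by
    intro v
    have hmem' := hL'sub v (hfL v)
    rw [hB] at hmem'
    simp only [Finset.mem_biUnion, Finset.mem_image, Finset.mem_range] at hmem'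
    obtain ⟨x, hx, i, hi, hfi⟩ := hmem'
    have hi' : (i : ℤ) < k := by exact_mod_cast hi
    have hi0 : (0 : ℤ) ≤ (i : ℤ) := Int.ofNat_nonneg i
    have hkey : c v = x := by
      show f v / (k : ℤ) = x
      rw [← hfi]
      have hre : (k : ℤ) * x + (i : ℤ) = (i : ℤ) + x * k := by ring
      rw [hre, Int.add_mul_ediv_right _ _ (by omega : (k : ℤ) ≠ 0),
        Int.ediv_eq_zero_of_lt hi0 hi', zero_add]
    rwa [hkey]
  have hcIco : ∀ (w : V) (a : ℤ), (f w / (k : ℤ)) = a → (k : ℤ) * a ≤ f w ∧ f w < k * a + k := by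
    intro w a ha
    have e1 := hdm w
    rw [ha] at e1
    constructor <;> linarith [hmodlo w, hmodhi w]
  refine ⟨c, hcL, ?_, ?_⟩
  · -- proper colouring
    intro u v huv heq
    have hge := hfl.1 u v huv
    have heq' : f u / (k : ℤ) = f v / (k : ℤ) := heq
    have e1 := hdm u
    have e2 := hdm v
    rw [heq'] at e1
    have hdiff : f u - f v = f u % k - f v % k := by linarith
    rcases abs_cases (f u - f v) with ⟨h1, _⟩ | ⟨h1, _⟩ <;>
      [skip; skip] <;> linarith [hmodlo u, hmodhi u, hmodlo v, hmodhi v]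
  · -- frugality
    intro v a
    set S : Set V := {u | u ∈ G.neighborSet v ∧ c u = a} with hS
    have hinj : Set.InjOn f S := by
      intro u hu u' hu' hfeq
      by_contra hne
      rcases em (G.Adj u u') with h | h
      · have := hfl.1 u u' h
        rw [hfeq] at this
        simp at this
        omega
      · have hu1 : G.Adj v u := hu.1
        have hu'1 : G.Adj v u' := hu'.1
        have := hfl.2 u u' hne h ⟨v, hu1.symm, hu'1⟩
        rw [hfeq] at this
        simp at this
    have himg : f '' S ⊆ ↑(Finset.Ico ((k : ℤ) * a) ((k : ℤ) * a + k)) := by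
      rintro y ⟨u, hu, rfl⟩
      simp only [Finset.coe_Ico, Set.mem_Ico]
      exact hcIco u a hu.2
    calc S.ncard = (f '' S).ncard := (Set.ncard_image_of_injOn hinj).symm
      _ ≤ (↑(Finset.Ico ((k : ℤ) * a) ((k : ℤ) * a + k)) : Set ℤ).ncard :=
          Set.ncard_le_ncard himg (Finset.finite_toSet _)
      _ = (Finset.Ico ((k : ℤ) * a) ((k : ℤ) * a + k)).card := Set.ncard_coe_finset _
      _ = k := by
          rw [Int.card_Ico]
          have : (k : ℤ) * a + k - k * a = (k : ℤ) := by ring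
          rw [this]
          simp
end

section
/- Let G be a finite multigraph (multiple edges allowed, no loops) and let k be an even positive integer. Then χ'_k(G) = ch'_k(G) = ⌈Δ(G)/k⌉. -/
open SimpleGraph

/-- A multigraph on vertex type `V` with edge index type `E`: each edge has a pair of
distinct endpoints (no loops); several edges may share the same endpoints. -/
structure Multigraph (V : Type*) (E : Type*) where
  ends : E → Sym2 V
  no_loops : ∀ e, ¬ (ends e).IsDiag

/-- The degree of a vertex of a multigraph: the number of edges incident with it. -/
noncomputable def Multigraph.degree {V E : Type*} (G : Multigraph V E) (v : V) : ℕ :=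
  {e : E | v ∈ G.ends e}.ncard

/-- The maximum degree `Δ(G)` of a multigraph. -/
noncomputable def Multigraph.maxDegree {V E : Type*} [Fintype V] (G : Multigraph V E) : ℕ :=
  Finset.univ.sup fun v => G.degree v

/-- A `k`-frugal edge colouring: no colour appears more than `k` times on the edges
incident with any vertex. -/
def Multigraph.IsFrugalEdgeColoring {V E α : Type*} (G : Multigraph V E) (k : ℕ)
    (c : E → α) : Prop :=
  ∀ (v : V) (a : α), {e : E | v ∈ G.ends e ∧ c e = a}.ncard ≤ k

/-- The `k`-frugal chromatic index `χ'_k(G)`: the least number of colours in a `k`-frugal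
edge colouring of `G`. -/
noncomputable def Multigraph.frugalChromaticIndex {V E : Type*} (G : Multigraph V E)
    (k : ℕ) : ℕ :=
  sInf {n : ℕ | ∃ c : E → ℕ, (∀ e, c e < n) ∧ G.IsFrugalEdgeColoring k c}

/-- The `k`-frugal edge choice number `ch'_k(G)`: the least `t` such that every assignment
of lists of `t` colours to the edges admits a `k`-frugal edge colouring from the lists. -/
noncomputable def Multigraph.frugalEdgeChoiceNumber {V E : Type*} (G : Multigraph V E)
    (k : ℕ) : ℕ :=
  sInf {t : ℕ | ∀ L : E → Finset ℤ, (∀ e, (L e).card = t) →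
    ∃ c : E → ℤ, (∀ e, c e ∈ L e) ∧ G.IsFrugalEdgeColoring k c}

section FrugalAux
open Finset

variable {F X Y β : Type*}

private def Dom (tl : F → X) (hd : F → Y) (φ : F → ℕ) (e f : F) : Prop :=
  (tl e = tl f ∧ φ e < φ f) ∨ (hd e = hd f ∧ φ f < φ e)

private instance [DecidableEq X] [DecidableEq Y] (tl : F → X) (hd : F → Y) (φ : F → ℕ)
    {e f : F} : Decidable (Dom tl hd φ e f) := by unfold Dom; infer_instance

private theorem kernel_exists {F X Y : Type*} [DecidableEq F] (tl : F → X) (hd : F → Y) (φ : F → ℕ)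
    (hp1 : ∀ e f, tl e = tl f → φ e = φ f → e = f)
    (hp2 : ∀ e f, hd e = hd f → φ e = φ f → e = f) (H : Finset F) :
    ∃ K ⊆ H, (∀ e ∈ K, ∀ f ∈ K, tl e = tl f → e = f) ∧
      (∀ e ∈ K, ∀ f ∈ K, hd e = hd f → e = f) ∧
      (∀ e ∈ H, e ∉ K → ∃ f ∈ K, Dom tl hd φ e f) := by
  classical
  induction H using Finset.strongInduction with
  | _ H ih => ?_
  -- set of favourites
  set S : Finset F := H.filter (fun e => ∀ f ∈ H, tl f = tl e → φ f ≤ φ e) with hS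
  have hSsub : S ⊆ H := filter_subset _ _
  have hmaxS : ∀ e ∈ H, ∃ b ∈ S, tl b = tl e ∧ φ e ≤ φ b := by
    intro e he
    obtain ⟨b, hb, hbm⟩ := Finset.exists_max_image (H.filter (fun f => tl f = tl e)) φ
      ⟨e, by simp [he]⟩
    simp only [mem_filter] at hb
    refine ⟨b, ?_, hb.2, hbm e (by simp [he])⟩
    refine mem_filter.2 ⟨hb.1, fun f hf htf => hbm f (by simp [hf, htf, hb.2])⟩
  have hStl : ∀ e ∈ S, ∀ f ∈ S, tl e = tl f → e = f := by
    intro e he f hf h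
    simp only [hS, mem_filter] at he hf
    exact hp1 e f h (le_antisymm (hf.2 e he.1 h) (he.2 f hf.1 h.symm))
  by_cases hcase : ∀ e ∈ S, ∀ f ∈ S, hd e = hd f → e = f
  · -- S itself is a kernel
    refine ⟨S, hSsub, hStl, hcase, ?_⟩
    intro e he heS
    obtain ⟨b, hbS, hbt, hbp⟩ := hmaxS e he
    refine ⟨b, hbS, Or.inl ⟨hbt.symm, lt_of_le_of_ne hbp ?_⟩⟩
    intro hphi
    exact heS (hp1 e b hbt.symm hphi ▸ hbS)
  · push_neg at hcase
    obtain ⟨e, heS, f, hfS, hhd, hef⟩ := hcase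
    -- wlog φ e < φ f ; remove the worse one (larger φ) : that's f if φ e < φ f
    have hne : φ e ≠ φ f := fun h => hef (hp2 e f hhd h)
    -- define g = the one with larger φ, e' the smaller
    rcases lt_or_gt_of_ne hne with hlt | hlt
    · -- φ e < φ f : remove f
      obtain ⟨K, hKsub, k1, k2, k3⟩ := ih (H.erase f)
        (erase_ssubset (hSsub hfS))
      refine ⟨K, hKsub.trans (erase_subset _ _), k1, k2, ?_⟩
      intro g hg hgK
      by_cases hgf : g = f
      · rw [hgf]
        have heH' : e ∈ H.erase f := mem_erase.2 ⟨hef, hSsub heS⟩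
        by_cases heK : e ∈ K
        · exact ⟨e, heK, Or.inr ⟨hhd.symm, hlt⟩⟩
        · obtain ⟨w, hwK, hw⟩ := k3 e heH' heK
          rcases hw with ⟨hwt, hwp⟩ | ⟨hwh, hwp⟩
          · -- impossible: e is max at its tail over H
            simp only [hS, mem_filter] at heS
            have := heS.2 w ((hKsub.trans (erase_subset _ _)) hwK) hwt.symm
            omega
          · exact ⟨w, hwK, Or.inr ⟨hwh ▸ hhd.symm, hwp.trans hlt⟩⟩
      · exact k3 g (mem_erase.2 ⟨hgf, hg⟩) hgK
    · -- φ f < φ e : remove e (symmetric)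
      obtain ⟨K, hKsub, k1, k2, k3⟩ := ih (H.erase e)
        (erase_ssubset (hSsub heS))
      refine ⟨K, hKsub.trans (erase_subset _ _), k1, k2, ?_⟩
      intro g hg hgK
      by_cases hge : g = e
      · rw [hge]
        have hfH' : f ∈ H.erase e := mem_erase.2 ⟨fun h => hef h.symm, hSsub hfS⟩
        by_cases hfK : f ∈ K
        · exact ⟨f, hfK, Or.inr ⟨hhd, hlt⟩⟩
        · obtain ⟨w, hwK, hw⟩ := k3 f hfH' hfK
          rcases hw with ⟨hwt, hwp⟩ | ⟨hwh, hwp⟩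
          · simp only [hS, mem_filter] at hfS
            have := hfS.2 w ((hKsub.trans (erase_subset _ _)) hwK) hwt.symm
            omega
          · exact ⟨w, hwK, Or.inr ⟨hwh ▸ hhd, hwp.trans hlt⟩⟩
      · exact k3 g (mem_erase.2 ⟨hge, hg⟩) hgK

private theorem bip_list_coloring {F X Y β : Type*} [DecidableEq F] [DecidableEq β] [DecidableEq X] [DecidableEq Y] [Nonempty β] (tl : F → X) (hd : F → Y) (φ : F → ℕ)
    (hp1 : ∀ e f, tl e = tl f → φ e = φ f → e = f)
    (hp2 : ∀ e f, hd e = hd f → φ e = φ f → e = f)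
    (H : Finset F) (L : F → Finset β)
    (hout : ∀ e ∈ H, (H.filter (fun f => Dom tl hd φ e f)).card < (L e).card) :
    ∃ c : F → β, (∀ e ∈ H, c e ∈ L e) ∧
      ∀ e ∈ H, ∀ f ∈ H, e ≠ f → (tl e = tl f ∨ hd e = hd f) → c e ≠ c f := by
  classical
  induction H using Finset.strongInduction generalizing L with
  | _ H ih => ?_
  rcases H.eq_empty_or_nonempty with rfl | ⟨e₀, he₀⟩
  · exact ⟨fun _ => Classical.arbitrary β, by simp, by simp⟩
  have hL0 : (L e₀).Nonempty := card_pos.1 (lt_of_le_of_lt (Nat.zero_le _) (hout e₀ he₀))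
  obtain ⟨a, ha⟩ := hL0
  set Ha : Finset F := H.filter (fun e => a ∈ L e) with hHa
  obtain ⟨K, hKsub, k1, k2, k3⟩ := kernel_exists tl hd φ hp1 hp2 Ha
  have hKH : K ⊆ H := hKsub.trans (filter_subset _ _)
  have hKne : K.Nonempty := by
    by_cases h : e₀ ∈ K
    · exact ⟨e₀, h⟩
    · obtain ⟨f, hf, -⟩ := k3 e₀ (mem_filter.2 ⟨he₀, ha⟩) h
      exact ⟨f, hf⟩
  set H' : Finset F := H \ K with hH'
  have hss : H' ⊂ H := by
    obtain ⟨w, hw⟩ := hKne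
    exact (ssubset_iff_of_subset sdiff_subset).2 ⟨w, hKH hw, by simp [hH', hw]⟩
  set L' : F → Finset β := fun e => if a ∈ L e then (L e).erase a else L e with hL'
  have hout' : ∀ e ∈ H', (H'.filter (fun f => Dom tl hd φ e f)).card < (L' e).card := by
    intro e he
    have heH : e ∈ H := (sdiff_subset) he
    have heK : e ∉ K := (mem_sdiff.1 he).2
    by_cases hea : a ∈ L e
    · -- e ∈ Ha \ K, has dominator in K
      obtain ⟨f₀, hf₀K, hdom⟩ := k3 e (mem_filter.2 ⟨heH, hea⟩) heK
      have hf₀ : f₀ ∈ H.filter (fun f => Dom tl hd φ e f) :=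
        mem_filter.2 ⟨hKH hf₀K, hdom⟩
      have hsub : H'.filter (fun f => Dom tl hd φ e f) ⊆
          (H.filter (fun f => Dom tl hd φ e f)).erase f₀ := by
        intro g hg
        simp only [mem_filter, mem_sdiff, hH'] at hg
        exact mem_erase.2 ⟨fun h => hg.1.2 (h ▸ hf₀K), mem_filter.2 ⟨hg.1.1, hg.2⟩⟩
      have h1 := card_le_card hsub
      rw [card_erase_of_mem hf₀] at h1
      have h2 : 1 ≤ (H.filter (fun f => Dom tl hd φ e f)).card := card_pos.2 ⟨f₀, hf₀⟩
      have h3 := hout e heH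
      have h4 : (L' e).card = (L e).card - 1 := by
        simp [hL', hea, card_erase_of_mem hea]
      omega
    · have h1 : H'.filter (fun f => Dom tl hd φ e f) ⊆ H.filter (fun f => Dom tl hd φ e f) :=
        filter_subset_filter _ (sdiff_subset)
      have h4 : L' e = L e := by simp [hL', hea]
      exact h4 ▸ lt_of_le_of_lt (card_le_card h1) (hout e heH)
  obtain ⟨c', hc'mem, hc'prop⟩ := ih H' hss L' hout'
  refine ⟨fun e => if e ∈ K then a else c' e, ?_, ?_⟩
  · intro e he
    by_cases heK : e ∈ K
    · simpa [heK] using (mem_filter.1 (hKsub heK)).2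
    · have he' : e ∈ H' := mem_sdiff.2 ⟨he, heK⟩
      have := hc'mem e he'
      simp only [heK, if_false]
      by_cases hea : a ∈ L e
      · exact (L e).erase_subset a (by simpa [hL', hea] using this)
      · simpa [hL', hea] using this
  · intro e he f hf hef hadj
    by_cases heK : e ∈ K <;> by_cases hfK : f ∈ K
    · exact absurd (hadj.elim (k1 e heK f hfK) (k2 e heK f hfK)) hef
    · -- e ∈ K, f ∉ K
      have hf' : f ∈ H' := mem_sdiff.2 ⟨hf, hfK⟩
      simp only [heK, hfK, if_true, if_false]
      intro hcc
      have hcf := hc'mem f hf'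
      by_cases hfa : a ∈ L f
      · rw [← hcc] at hcf; simp [hL', hfa] at hcf
      · rw [← hcc] at hcf; simp [hL', hfa] at hcf
    · have he' : e ∈ H' := mem_sdiff.2 ⟨he, heK⟩
      simp only [heK, hfK, if_true, if_false]
      intro hcc
      have hce := hc'mem e he'
      by_cases hea : a ∈ L e
      · rw [hcc] at hce; simp [hL', hea] at hce
      · rw [hcc] at hce; simp [hL', hea] at hce
    · have he' : e ∈ H' := mem_sdiff.2 ⟨he, heK⟩
      have hf' : f ∈ H' := mem_sdiff.2 ⟨hf, hfK⟩
      simpa [heK, hfK] using hc'prop e he' f hf' hef hadj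

private theorem exists_matching {F X Y : Type*} [Fintype F] [Fintype X] [Fintype Y] [DecidableEq F] [DecidableEq X] [DecidableEq Y] (tl : F → X) (hd : F → Y) (D : ℕ) (s : Finset F)
    (hX : ∀ x, (s.filter fun e => tl e = x).card ≤ D + 1)
    (hY : ∀ y, (s.filter fun e => hd e = y).card ≤ D + 1) :
    ∃ M ⊆ s, (∀ e ∈ M, ∀ f ∈ M, tl e = tl f → e = f) ∧
      (∀ e ∈ M, ∀ f ∈ M, hd e = hd f → e = f) ∧
      (∀ x, (s.filter fun e => tl e = x).card = D + 1 → ∃ e ∈ M, tl e = x) ∧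
      (∀ y, (s.filter fun e => hd e = y).card = D + 1 → ∃ e ∈ M, hd e = y) := by
  classical
  set nbr : (X ⊕ Y) → (Y ⊕ X) → ℕ := fun u w =>
    match u, w with
    | Sum.inl x, Sum.inl y => (s.filter fun e => tl e = x ∧ hd e = y).card
    | Sum.inl x, Sum.inr x' => if x = x' then D + 1 - (s.filter fun e => tl e = x).card else 0
    | Sum.inr y, Sum.inl y' => if y = y' then D + 1 - (s.filter fun e => hd e = y).card else 0
    | Sum.inr y, Sum.inr x => (s.filter fun e => tl e = x ∧ hd e = y).card
    with hnbr
  have fibX : ∀ x, ∑ y : Y, (s.filter fun e => tl e = x ∧ hd e = y).card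
      = (s.filter fun e => tl e = x).card := by
    intro x
    rw [Finset.card_eq_sum_card_fiberwise (f := hd) (t := univ) (fun e _ => mem_univ _)]
    refine Finset.sum_congr rfl fun y _ => ?_
    rw [Finset.filter_filter]
  have fibY : ∀ y, ∑ x : X, (s.filter fun e => tl e = x ∧ hd e = y).card
      = (s.filter fun e => hd e = y).card := by
    intro y
    rw [Finset.card_eq_sum_card_fiberwise (f := tl) (t := univ) (fun e _ => mem_univ _)]
    refine Finset.sum_congr rfl fun x _ => ?_
    rw [Finset.filter_filter]
    congr 1; ext e; simp [and_comm]
  have rowsum : ∀ u, ∑ w : Y ⊕ X, nbr u w = D + 1 := by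
    intro u
    rcases u with x | y
    · rw [Fintype.sum_sum_type]
      have h1 : ∑ y : Y, nbr (Sum.inl x) (Sum.inl y) = (s.filter fun e => tl e = x).card := fibX x
      have h2 : ∑ x' : X, nbr (Sum.inl x) (Sum.inr x') = D + 1 - (s.filter fun e => tl e = x).card := by
        simp [hnbr]
      rw [h1, h2]
      have := hX x; omega
    · rw [Fintype.sum_sum_type]
      have h1 : ∑ y' : Y, nbr (Sum.inr y) (Sum.inl y') = D + 1 - (s.filter fun e => hd e = y).card := by
        simp [hnbr]
      have h2 : ∑ x : X, nbr (Sum.inr y) (Sum.inr x) = (s.filter fun e => hd e = y).card := fibY y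
      rw [h1, h2]
      have := hY y; omega
  have colsum : ∀ w, ∑ u : X ⊕ Y, nbr u w = D + 1 := by
    intro w
    rcases w with y | x
    · rw [Fintype.sum_sum_type]
      have h1 : ∑ x : X, nbr (Sum.inl x) (Sum.inl y) = (s.filter fun e => hd e = y).card := fibY y
      have h2 : ∑ y' : Y, nbr (Sum.inr y') (Sum.inl y) = D + 1 - (s.filter fun e => hd e = y).card := by
        simp [hnbr]
      rw [h1, h2]
      have := hY y; omega
    · rw [Fintype.sum_sum_type]
      have h1 : ∑ x' : X, nbr (Sum.inl x') (Sum.inr x) = D + 1 - (s.filter fun e => tl e = x).card := by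
        simp [hnbr]
      have h2 : ∑ y : Y, nbr (Sum.inr y) (Sum.inr x) = (s.filter fun e => tl e = x).card := fibX x
      rw [h1, h2]
      have := hX x; omega
  set t : (X ⊕ Y) → Finset (Y ⊕ X) := fun u => univ.filter (fun w => 0 < nbr u w) with ht
  have hall : ∀ A : Finset (X ⊕ Y), A.card ≤ (A.biUnion t).card := by
    intro A
    have key : (D + 1) * A.card ≤ (D + 1) * (A.biUnion t).card := by
      calc (D + 1) * A.card = ∑ u ∈ A, (D + 1) := by rw [Finset.sum_const, smul_eq_mul, mul_comm]
        _ = ∑ u ∈ A, ∑ w ∈ A.biUnion t, nbr u w := by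
            refine Finset.sum_congr rfl fun u hu => ?_
            rw [← rowsum u]
            refine (Finset.sum_subset (subset_univ _) fun w _ hw => ?_).symm
            by_contra h
            exact hw (mem_biUnion.2 ⟨u, hu, mem_filter.2 ⟨mem_univ _, Nat.pos_of_ne_zero h⟩⟩)
        _ = ∑ w ∈ A.biUnion t, ∑ u ∈ A, nbr u w := Finset.sum_comm
        _ ≤ ∑ w ∈ A.biUnion t, ∑ u : X ⊕ Y, nbr u w := by
            refine Finset.sum_le_sum fun w _ => ?_
            exact Finset.sum_le_sum_of_subset (subset_univ _)
        _ = ∑ w ∈ A.biUnion t, (D + 1) := by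
            exact Finset.sum_congr rfl fun w _ => colsum w
        _ = (D + 1) * (A.biUnion t).card := by rw [Finset.sum_const, smul_eq_mul, mul_comm]
    exact Nat.le_of_mul_le_mul_left key (Nat.succ_pos D)
  obtain ⟨g, hginj, hgmem⟩ := (Finset.all_card_le_biUnion_card_iff_exists_injective t).1 hall
  have hgpos : ∀ u, 0 < nbr u (g u) := fun u => (mem_filter.1 (hgmem u)).2
  have hgbij : Function.Bijective g := by
    rw [Fintype.bijective_iff_injective_and_card]
    exact ⟨hginj, by simp [Fintype.card_sum, add_comm]⟩
  -- selection
  set sel : X → Finset F := fun x =>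
    s.filter (fun e => tl e = x ∧ Sum.inl (hd e) = g (Sum.inl x)) with hsel
  set ex : X → Finset F := fun x =>
    if h : (sel x).Nonempty then {h.choose} else ∅ with hex
  set M : Finset F := univ.biUnion ex with hM
  have hMel : ∀ e ∈ M, e ∈ sel (tl e) ∧ e ∈ ex (tl e) := by
    intro e he
    obtain ⟨x, -, hx⟩ := mem_biUnion.1 he
    rw [hex] at hx
    by_cases h : (sel x).Nonempty
    · simp only [dif_pos h, mem_singleton] at hx
      subst hx
      have := h.choose_spec
      have htl : tl h.choose = x := ((mem_filter.1 this).2).1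
      rw [htl]
      exact ⟨this, by rw [hex]; simp [dif_pos h]⟩
    · simp [dif_neg h] at hx
  have hMs : M ⊆ s := fun e he => (mem_filter.1 (hMel e he).1).1
  have htlinjM : ∀ e ∈ M, ∀ f ∈ M, tl e = tl f → e = f := by
    intro e he f hf h
    have h1 := (hMel e he).2
    have h2 := (hMel f hf).2
    rw [h] at h1
    rw [hex] at h1 h2
    by_cases hne : (sel (tl f)).Nonempty
    · simp only [dif_pos hne, mem_singleton] at h1 h2; exact h1.trans h2.symm
    · simp [dif_neg hne] at h1
  have hhdinjM : ∀ e ∈ M, ∀ f ∈ M, hd e = hd f → e = f := by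
    intro e he f hf h
    have h1 := ((mem_filter.1 (hMel e he).1).2).2
    have h2 := ((mem_filter.1 (hMel f hf).1).2).2
    rw [h] at h1
    have := hginj (h1.symm.trans h2)
    exact htlinjM e he f hf (Sum.inl.inj this)
  refine ⟨M, hMs, htlinjM, hhdinjM, ?_, ?_⟩
  · intro x hx
    have hgl : ∃ y, g (Sum.inl x) = Sum.inl y := by
      rcases hgx : g (Sum.inl x) with y | x'
      · exact ⟨y, rfl⟩
      · have := hgpos (Sum.inl x)
        rw [hgx] at this
        simp only [hnbr] at this
        exfalso
        split_ifs at this with hxx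
        · subst hxx; omega
        · omega
    obtain ⟨y, hy⟩ := hgl
    have hnon : (sel x).Nonempty := by
      have := hgpos (Sum.inl x)
      rw [hy] at this
      simp only [hnbr] at this
      obtain ⟨e, he⟩ := card_pos.1 this
      refine ⟨e, ?_⟩
      rw [hsel]
      have := mem_filter.1 he
      exact mem_filter.2 ⟨this.1, this.2.1, by rw [this.2.2, hy]⟩
    refine ⟨hnon.choose, ?_, ((mem_filter.1 hnon.choose_spec).2).1⟩
    rw [hM]
    refine mem_biUnion.2 ⟨x, mem_univ _, ?_⟩
    rw [hex]; simp [dif_pos hnon]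
  · intro y hy
    obtain ⟨u, hu⟩ := hgbij.2 (Sum.inl y)
    rcases hux : u with x | y'
    · rw [hux] at hu
      have hnon : (sel x).Nonempty := by
        have := hgpos (Sum.inl x)
        rw [hu] at this
        simp only [hnbr] at this
        obtain ⟨e, he⟩ := card_pos.1 this
        have hef := mem_filter.1 he
        exact ⟨e, mem_filter.2 ⟨hef.1, hef.2.1, by rw [hef.2.2, hu]⟩⟩
      have hmem : hnon.choose ∈ M := by
        rw [hM]
        refine mem_biUnion.2 ⟨x, mem_univ _, ?_⟩
        rw [hex]; simp [dif_pos hnon]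
      refine ⟨hnon.choose, hmem, ?_⟩
      have := ((mem_filter.1 hnon.choose_spec).2).2
      rw [hu] at this
      exact Sum.inl.inj this
    · rw [hux] at hu
      have := hgpos (Sum.inr y')
      rw [hu] at this
      simp only [hnbr] at this
      exfalso
      split_ifs at this with hyy
      · subst hyy; omega
      · omega

private theorem konig_coloring {F X Y : Type*} [Fintype F] [Fintype X] [Fintype Y] [DecidableEq F] [DecidableEq X] [DecidableEq Y] (tl : F → X) (hd : F → Y) (D : ℕ) (s : Finset F)
    (hX : ∀ x, (s.filter fun e => tl e = x).card ≤ D)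
    (hY : ∀ y, (s.filter fun e => hd e = y).card ≤ D) :
    ∃ φ : F → ℕ, (∀ e ∈ s, φ e < D) ∧
      (∀ e ∈ s, ∀ f ∈ s, tl e = tl f → φ e = φ f → e = f) ∧
      (∀ e ∈ s, ∀ f ∈ s, hd e = hd f → φ e = φ f → e = f) := by
  classical
  induction D generalizing s with
  | zero =>
    refine ⟨fun _ => 0, fun e he => absurd (hX (tl e)) ?_, fun e he => absurd (hX (tl e)) ?_,
      fun e he => absurd (hX (tl e)) ?_⟩ <;>
    · simp only [not_le]
      exact card_pos.2 ⟨e, mem_filter.2 ⟨he, rfl⟩⟩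
  | succ D ih =>
    obtain ⟨M, hMs, hMtl, hMhd, hcovX, hcovY⟩ := exists_matching tl hd D s hX hY
    have hX' : ∀ x, ((s \ M).filter fun e => tl e = x).card ≤ D := by
      intro x
      by_cases hfull : (s.filter fun e => tl e = x).card = D + 1
      · obtain ⟨e₀, he₀M, he₀x⟩ := hcovX x hfull
        have hsub : (s \ M).filter (fun e => tl e = x) ⊆
            (s.filter fun e => tl e = x).erase e₀ := by
          intro g hg
          simp only [mem_filter, mem_sdiff] at hg
          exact mem_erase.2 ⟨fun h => hg.1.2 (h ▸ he₀M), mem_filter.2 ⟨hg.1.1, hg.2⟩⟩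
        calc ((s \ M).filter fun e => tl e = x).card ≤ _ := card_le_card hsub
          _ = D := by rw [card_erase_of_mem (mem_filter.2 ⟨hMs he₀M, he₀x⟩), hfull]; omega
      · have := hX x
        have h2 := card_le_card (filter_subset_filter (fun e => tl e = x) (sdiff_subset (t := M) (s := s)))
        omega
    have hY' : ∀ y, ((s \ M).filter fun e => hd e = y).card ≤ D := by
      intro y
      by_cases hfull : (s.filter fun e => hd e = y).card = D + 1
      · obtain ⟨e₀, he₀M, he₀y⟩ := hcovY y hfull
        have hsub : (s \ M).filter (fun e => hd e = y) ⊆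
            (s.filter fun e => hd e = y).erase e₀ := by
          intro g hg
          simp only [mem_filter, mem_sdiff] at hg
          exact mem_erase.2 ⟨fun h => hg.1.2 (h ▸ he₀M), mem_filter.2 ⟨hg.1.1, hg.2⟩⟩
        calc ((s \ M).filter fun e => hd e = y).card ≤ _ := card_le_card hsub
          _ = D := by rw [card_erase_of_mem (mem_filter.2 ⟨hMs he₀M, he₀y⟩), hfull]; omega
      · have := hY y
        have h2 := card_le_card (filter_subset_filter (fun e => hd e = y) (sdiff_subset (t := M) (s := s)))
        omega
    obtain ⟨ψ, hψlt, hψtl, hψhd⟩ := ih (s \ M) hX' hY'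
    refine ⟨fun e => if e ∈ M then D else ψ e, ?_, ?_, ?_⟩
    · intro e he
      by_cases heM : e ∈ M
      · simp [heM]
      · simpa [heM] using Nat.lt_succ_of_lt (hψlt e (mem_sdiff.2 ⟨he, heM⟩))
    · intro e he f hf htt hpp
      by_cases heM : e ∈ M <;> by_cases hfM : f ∈ M
      · exact hMtl e heM f hfM htt
      · exfalso
        simp only [if_pos heM, if_neg hfM] at hpp
        exact absurd hpp.symm (Nat.ne_of_lt (hψlt f (mem_sdiff.2 ⟨hf, hfM⟩)))
      · exfalso
        simp only [if_pos hfM, if_neg heM] at hpp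
        exact absurd hpp (Nat.ne_of_lt (hψlt e (mem_sdiff.2 ⟨he, heM⟩)))
      · simp only [if_neg heM, if_neg hfM] at hpp
        exact hψtl e (mem_sdiff.2 ⟨he, heM⟩) f (mem_sdiff.2 ⟨hf, hfM⟩) htt hpp
    · intro e he f hf htt hpp
      by_cases heM : e ∈ M <;> by_cases hfM : f ∈ M
      · exact hMhd e heM f hfM htt
      · exfalso
        simp only [if_pos heM, if_neg hfM] at hpp
        exact absurd hpp.symm (Nat.ne_of_lt (hψlt f (mem_sdiff.2 ⟨hf, hfM⟩)))
      · exfalso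
        simp only [if_pos hfM, if_neg heM] at hpp
        exact absurd hpp (Nat.ne_of_lt (hψlt e (mem_sdiff.2 ⟨he, heM⟩)))
      · simp only [if_neg heM, if_neg hfM] at hpp
        exact hψhd e (mem_sdiff.2 ⟨he, heM⟩) f (mem_sdiff.2 ⟨hf, hfM⟩) htt hpp

/-- Galvin: list edge colouring of bipartite multigraphs with lists of size ≥ max degree. -/
private theorem galvin {F X Y β : Type*} [Fintype F] [Fintype X] [Fintype Y] [DecidableEq F] [DecidableEq X] [DecidableEq Y] [DecidableEq β] (tl : F → X) (hd : F → Y) (D : ℕ) [Nonempty β]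
    (hX : ∀ x, (univ.filter fun e : F => tl e = x).card ≤ D)
    (hY : ∀ y, (univ.filter fun e : F => hd e = y).card ≤ D)
    (L : F → Finset β) (hL : ∀ e, D ≤ (L e).card) :
    ∃ c : F → β, (∀ e, c e ∈ L e) ∧
      ∀ e f, e ≠ f → (tl e = tl f ∨ hd e = hd f) → c e ≠ c f := by
  classical
  obtain ⟨φ, hφlt, hφtl, hφhd⟩ := konig_coloring tl hd D univ hX hY
  have hp1 : ∀ e f, tl e = tl f → φ e = φ f → e = f := fun e f h1 h2 =>
    hφtl e (mem_univ _) f (mem_univ _) h1 h2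
  have hp2 : ∀ e f, hd e = hd f → φ e = φ f → e = f := fun e f h1 h2 =>
    hφhd e (mem_univ _) f (mem_univ _) h1 h2
  have hout : ∀ e ∈ (univ : Finset F),
      (univ.filter (fun f => Dom tl hd φ e f)).card < (L e).card := by
    intro e _
    have hsub : univ.filter (fun f => Dom tl hd φ e f) ⊆
        (univ.filter fun f => tl f = tl e ∧ φ e < φ f) ∪
        (univ.filter fun f => hd f = hd e ∧ φ f < φ e) := by
      intro f hf
      rcases (mem_filter.1 hf).2 with ⟨h1, h2⟩ | ⟨h1, h2⟩
      · exact mem_union_left _ (mem_filter.2 ⟨mem_univ _, h1.symm, h2⟩)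
      · exact mem_union_right _ (mem_filter.2 ⟨mem_univ _, h1.symm, h2⟩)
    have c1 : (univ.filter fun f => tl f = tl e ∧ φ e < φ f).card ≤ D - 1 - φ e := by
      have : ∀ f ∈ (univ.filter fun f => tl f = tl e ∧ φ e < φ f),
          φ f ∈ Finset.Ico (φ e + 1) D := by
        intro f hf
        have h := (mem_filter.1 hf).2
        exact Finset.mem_Ico.2 ⟨h.2, hφlt f (mem_univ _)⟩
      have hinj : Set.InjOn φ ↑(univ.filter fun f => tl f = tl e ∧ φ e < φ f) := by
        intro a ha b hb hab
        have ha' := (mem_filter.1 ha).2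
        have hb' := (mem_filter.1 hb).2
        exact hp1 a b (ha'.1.trans hb'.1.symm) hab
      have := Finset.card_le_card_of_injOn φ this hinj
      rwa [Nat.card_Ico, show D - (φ e + 1) = D - 1 - φ e by omega] at this
    have c2 : (univ.filter fun f => hd f = hd e ∧ φ f < φ e).card ≤ φ e := by
      have : ∀ f ∈ (univ.filter fun f => hd f = hd e ∧ φ f < φ e),
          φ f ∈ Finset.range (φ e) := by
        intro f hf
        exact Finset.mem_range.2 (mem_filter.1 hf).2.2
      have hinj : Set.InjOn φ ↑(univ.filter fun f => hd f = hd e ∧ φ f < φ e) := by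
        intro a ha b hb hab
        have ha' := (mem_filter.1 ha).2
        have hb' := (mem_filter.1 hb).2
        exact hp2 a b (ha'.1.trans hb'.1.symm) hab
      have := Finset.card_le_card_of_injOn φ this hinj
      rwa [Finset.card_range] at this
    have hlt := hφlt e (mem_univ _)
    calc (univ.filter (fun f => Dom tl hd φ e f)).card
        ≤ _ := card_le_card hsub
      _ ≤ _ := card_union_le _ _
      _ ≤ (D - 1 - φ e) + φ e := Nat.add_le_add c1 c2
      _ < D := by omega
      _ ≤ (L e).card := hL e
  obtain ⟨c, hcmem, hcprop⟩ := bip_list_coloring tl hd φ hp1 hp2 univ L hout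
  exact ⟨c, fun e => hcmem e (mem_univ _),
    fun e f hef hadj => hcprop e (mem_univ _) f (mem_univ _) hef hadj⟩

/-- endpoints of a non-diagonal `Sym2` as a 2-element finset -/
private lemma card_endpoints {V : Type*} [Fintype V] [DecidableEq V] (z : Sym2 V) (hz : ¬ z.IsDiag) :
    (univ.filter fun v => v ∈ z).card = 2 := by
  induction z using Sym2.ind with
  | _ a b =>
    have hab : a ≠ b := by simpa using hz
    have : (univ.filter fun v => v ∈ s(a, b)) = {a, b} := by
      ext v; simp [Sym2.mem_iff]
    rw [this, card_insert_of_notMem (by simpa using hab), card_singleton]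

private lemma handshake {V E' : Type*} [Fintype V] [DecidableEq V] [Fintype E'] (ends : E' → Sym2 V)
    (hnl : ∀ e, ¬ (ends e).IsDiag) :
    ∑ v : V, (univ.filter fun e => v ∈ ends e).card = 2 * Fintype.card E' := by
  have : ∀ v : V, (univ.filter fun e => v ∈ ends e).card
      = ∑ e : E', if v ∈ ends e then 1 else 0 := by
    intro v; rw [Finset.card_filter]
  simp_rw [this]
  rw [Finset.sum_comm]
  have : ∀ e : E', ∑ v : V, (if v ∈ ends e then 1 else 0) = 2 := by
    intro e
    rw [← Finset.card_filter]
    exact card_endpoints _ (hnl e)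
  simp_rw [this, Finset.sum_const, card_univ, smul_eq_mul, mul_comm]

private theorem exists_balanced_orientation {V E : Type*} [Fintype V] [Fintype E] [DecidableEq V] (ends : E → Sym2 V) (hnl : ∀ e, ¬ (ends e).IsDiag) :
    ∃ hd : E → V, (∀ e, hd e ∈ ends e) ∧ ∀ v : V,
      (univ.filter fun e => hd e = v).card ≤ ((univ.filter fun e => v ∈ ends e).card + 1) / 2 ∧
      (univ.filter fun e => v ∈ ends e ∧ hd e ≠ v).card
        ≤ ((univ.filter fun e => v ∈ ends e).card + 1) / 2 := by
  classical
  set deg : V → ℕ := fun v => (univ.filter fun e => v ∈ ends e).card with hdeg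
  set O : Finset V := univ.filter (fun v => Odd (deg v)) with hO
  have hOeven : Even O.card := by
    have h1 : Even (∑ v : V, deg v) := by
      rw [hdeg, handshake ends hnl]; exact even_two_mul _
    rw [Finset.even_sum_iff_even_card_odd] at h1
    exact h1
  obtain ⟨m, hm⟩ := hOeven
  have hcard : O.card = 2 * m := by omega
  -- dummy edges pairing odd vertices
  set ed : Fin m → Sym2 V := fun j =>
    s( (O.equivFin.symm ⟨j.val, by have := j.isLt; omega⟩ : {x // x ∈ O}).val,
       (O.equivFin.symm ⟨j.val + m, by have := j.isLt; omega⟩ : {x // x ∈ O}).val ) with hed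
  have hednl : ∀ j, ¬ (ed j).IsDiag := by
    intro j h
    rw [hed] at h
    simp only [Sym2.mk_isDiag_iff] at h
    have := Subtype.val_injective h
    have := O.equivFin.symm.injective this
    have : j.val = j.val + m := congrArg Fin.val this
    have := j.isLt; omega
  set ends' : (E ⊕ Fin m) → Sym2 V := Sum.elim ends ed with hends'
  have hnl' : ∀ e, ¬ (ends' e).IsDiag := by
    rintro (e | j) <;> [exact hnl e; exact hednl j]
  set deg' : V → ℕ := fun v => (univ.filter fun e => v ∈ ends' e).card with hdeg'
  have hdegsum : ∀ v, deg' v = deg v + (univ.filter fun j : Fin m => v ∈ ed j).card := by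
    intro v
    simp only [hdeg', hdeg]
    rw [Finset.card_filter, Finset.card_filter, Finset.card_filter, Fintype.sum_sum_type]
    rfl
  have hdummy : ∀ v, (univ.filter fun j : Fin m => v ∈ ed j).card = if v ∈ O then 1 else 0 := by
    intro v
    by_cases hv : v ∈ O
    · rw [if_pos hv]
      have hklt : ((O.equivFin ⟨v, hv⟩ : Fin O.card) : ℕ) < 2 * m := by
        rw [← hcard]; exact (O.equivFin ⟨v, hv⟩).isLt
      set k : ℕ := ((O.equivFin ⟨v, hv⟩ : Fin O.card) : ℕ) with hk
      have hiv : ∀ i : Fin O.card, ((O.equivFin.symm i : {x // x ∈ O}) : V) = v ↔ (i : ℕ) = k := by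
        intro i
        constructor
        · intro h
          have h2 : O.equivFin.symm i = ⟨v, hv⟩ := Subtype.ext h
          rw [(Equiv.symm_apply_eq _).1 h2]
        · intro h
          have h3 : i = O.equivFin ⟨v, hv⟩ := Fin.ext h
          rw [h3, Equiv.symm_apply_apply]
      have key : ∀ j : Fin m, v ∈ ed j ↔ (j.val = k ∨ j.val + m = k) := by
        intro j
        rw [hed]
        simp only [Sym2.mem_iff]
        constructor
        · rintro (h | h)
          · exact Or.inl ((hiv _).1 h.symm)
          · exact Or.inr ((hiv _).1 h.symm)
        · rintro (h | h)
          · exact Or.inl (((hiv ⟨j.val, by have := j.isLt; omega⟩).2 h).symm)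
          · exact Or.inr (((hiv ⟨j.val + m, by have := j.isLt; omega⟩).2 h).symm)
      have hjlt : (if k < m then k else k - m) < m := by split_ifs <;> omega
      have : (univ.filter fun j : Fin m => v ∈ ed j) = {⟨if k < m then k else k - m, hjlt⟩} := by
        ext j
        simp only [mem_filter, mem_univ, true_and, mem_singleton, key j, Fin.ext_iff]
        have := j.isLt
        split_ifs <;> omega
      rw [this, card_singleton]
    · rw [if_neg hv]
      rw [Finset.card_eq_zero, Finset.filter_eq_empty_iff]
      intro j _
      rw [hed]
      simp only [Sym2.mem_iff]
      push_neg
      constructor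
      · intro h; exact hv (h ▸ (O.equivFin.symm _).prop)
      · intro h; exact hv (h ▸ (O.equivFin.symm _).prop)
  have hdeg'even : ∀ v, Even (deg' v) := by
    intro v
    rw [hdegsum v, hdummy v]
    by_cases hv : v ∈ O
    · rw [if_pos hv]
      rw [hO, mem_filter] at hv
      obtain ⟨k, hk⟩ := hv.2
      rw [Nat.even_iff]; omega
    · rw [if_neg hv]
      rw [hO, mem_filter] at hv
      simp only [mem_univ, true_and] at hv
      rw [Nat.odd_iff] at hv
      rw [Nat.even_iff]
      omega
  -- Hall system on slots
  set slotv : V → Finset (V × ℕ) :=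
    fun v => (Finset.range (deg' v / 2)).image (fun i => (v, i)) with hslotv
  set endsFin : Sym2 V → Finset V := fun z => univ.filter (fun v => v ∈ z) with hendsFin
  set t : (E ⊕ Fin m) → Finset (V × ℕ) :=
    fun e => (endsFin (ends' e)).biUnion slotv with htt
  have hslotcard : ∀ v, (slotv v).card = deg' v / 2 := by
    intro v
    rw [hslotv]
    rw [Finset.card_image_of_injective _ (fun a b h => by simpa using h), Finset.card_range]
  have hdisj : ∀ (W : Finset V), ∀ x ∈ W, ∀ y ∈ W, x ≠ y → Disjoint (slotv x) (slotv y) := by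
    intro W x _ y _ hxy
    rw [Finset.disjoint_left]
    intro p hp hq
    rw [hslotv] at hp hq
    obtain ⟨i, _, hpi⟩ := mem_image.1 hp
    obtain ⟨i', _, hqi⟩ := mem_image.1 hq
    exact hxy (by rw [← hpi] at hqi; exact (Prod.mk.injEq _ _ _ _ ▸ hqi).1.symm ▸ rfl)
  have hall : ∀ A : Finset (E ⊕ Fin m), A.card ≤ (A.biUnion t).card := by
    intro A
    set W : Finset V := A.biUnion (fun e => endsFin (ends' e)) with hW
    have hbi : A.biUnion t = W.biUnion slotv := by
      rw [hW, Finset.biUnion_biUnion]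
    have hcardW : (W.biUnion slotv).card = ∑ v ∈ W, deg' v / 2 := by
      rw [Finset.card_biUnion (hdisj W)]
      exact Finset.sum_congr rfl (fun v _ => hslotcard v)
    have hdouble : 2 * A.card ≤ ∑ v ∈ W, deg' v := by
      calc 2 * A.card = ∑ _e ∈ A, 2 := by rw [Finset.sum_const, smul_eq_mul, mul_comm]
        _ = ∑ e ∈ A, (W.filter (fun v => v ∈ ends' e)).card := by
            refine Finset.sum_congr rfl fun e he => ?_
            have hsub : endsFin (ends' e) ⊆ W := by
              intro v hv'
              rw [hW]
              exact mem_biUnion.2 ⟨e, he, hv'⟩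
            have heq : W.filter (fun v => v ∈ ends' e) = endsFin (ends' e) := by
              ext v
              simp only [hendsFin, mem_filter, mem_univ, true_and]
              constructor
              · intro h; exact h.2
              · intro h
                refine ⟨hsub ?_, h⟩
                rw [hendsFin]
                exact mem_filter.2 ⟨mem_univ _, h⟩
            rw [heq, hendsFin]
            exact (card_endpoints _ (hnl' e)).symm
        _ = ∑ e ∈ A, ∑ v ∈ W, (if v ∈ ends' e then 1 else 0) := by
            refine Finset.sum_congr rfl fun e _ => ?_
            rw [Finset.card_filter]
        _ = ∑ v ∈ W, ∑ e ∈ A, (if v ∈ ends' e then 1 else 0) := Finset.sum_comm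
        _ ≤ ∑ v ∈ W, deg' v := by
            refine Finset.sum_le_sum fun v _ => ?_
            rw [← Finset.card_filter]
            exact card_le_card (filter_subset_filter _ (subset_univ A))
    have heq2 : ∑ v ∈ W, deg' v = 2 * ∑ v ∈ W, (deg' v / 2) := by
      rw [Finset.mul_sum]
      exact Finset.sum_congr rfl fun v _ =>
        (Nat.mul_div_cancel' (even_iff_two_dvd.mp (hdeg'even v))).symm
    rw [hbi, hcardW]
    omega
  obtain ⟨f, hfinj, hfmem⟩ := (Finset.all_card_le_biUnion_card_iff_exists_injective t).1 hall
  have hfspec : ∀ e', (f e').1 ∈ ends' e' ∧ (f e').2 < deg' (f e').1 / 2 := by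
    intro e'
    have hm' := hfmem e'
    rw [htt] at hm'
    obtain ⟨v, hv, hmem⟩ := mem_biUnion.1 hm'
    rw [hslotv] at hmem
    obtain ⟨i, hi, hpair⟩ := mem_image.1 hmem
    rw [hendsFin, mem_filter] at hv
    rw [← hpair]
    exact ⟨hv.2, mem_range.1 hi⟩
  set hcnt : V → ℕ := fun v => (univ.filter fun e' => (f e').1 = v).card with hhcnt
  have hle : ∀ v, hcnt v ≤ deg' v / 2 := by
    intro v
    show (univ.filter fun e' => (f e').1 = v).card ≤ deg' v / 2
    have hcr : (Finset.range (deg' v / 2)).card = deg' v / 2 := Finset.card_range _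
    rw [← hcr]
    refine Finset.card_le_card_of_injOn (fun e' => (f e').2)
      (fun e' he' => ?_) (fun a ha b hb hab => ?_)
    · have h1 := (mem_filter.1 he').2
      have h2 := (hfspec e').2
      rw [h1] at h2
      exact mem_range.2 h2
    · have h1 := (mem_filter.1 (by exact ha)).2
      have h2 := (mem_filter.1 (by exact hb)).2
      apply hfinj
      exact Prod.ext (h1.trans h2.symm) hab
  have hsum : ∑ v, hcnt v = Fintype.card (E ⊕ Fin m) := by
    rw [← card_univ]
    exact (Finset.card_eq_sum_card_fiberwise
      (fun e' _ => mem_univ ((f e').1))).symm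
  have hsum2 : ∑ v, deg' v / 2 = Fintype.card (E ⊕ Fin m) := by
    have h2 : ∑ v, deg' v = 2 * Fintype.card (E ⊕ Fin m) := handshake ends' hnl'
    have h3 : ∑ v, deg' v = 2 * ∑ v, (deg' v / 2) := by
      rw [Finset.mul_sum]
      exact Finset.sum_congr rfl fun v _ =>
        (Nat.mul_div_cancel' (even_iff_two_dvd.mp (hdeg'even v))).symm
    omega
  have hexact : ∀ v, hcnt v = deg' v / 2 := by
    have h := (Finset.sum_eq_sum_iff_of_le (fun v (_ : v ∈ univ) => hle v)).1
      (hsum.trans hsum2.symm)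
    exact fun v => h v (mem_univ v)
  have htails : ∀ v, (univ.filter fun e' => v ∈ ends' e' ∧ (f e').1 ≠ v).card = deg' v / 2 := by
    intro v
    have hpart := Finset.card_filter_add_card_filter_not
      (s := univ.filter (fun e' : E ⊕ Fin m => v ∈ ends' e')) (p := fun e' => (f e').1 = v)
    have e1 : ((univ.filter (fun e' : E ⊕ Fin m => v ∈ ends' e')).filter
        (fun e' => (f e').1 = v)) = (univ.filter fun e' => (f e').1 = v) := by
      rw [Finset.filter_filter]
      ext e'
      simp only [mem_filter, mem_univ, true_and]
      exact ⟨fun h => h.2, fun h => ⟨h ▸ (hfspec e').1, h⟩⟩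
    have e2 : ((univ.filter (fun e' : E ⊕ Fin m => v ∈ ends' e')).filter
        (fun e' => ¬ (f e').1 = v)) = (univ.filter fun e' => v ∈ ends' e' ∧ (f e').1 ≠ v) := by
      rw [Finset.filter_filter]
    rw [e1, e2] at hpart
    have h1 : (univ.filter fun e' => (f e').1 = v).card = deg' v / 2 := by
      rw [← hexact v]
    have h2 : (univ.filter fun e' : E ⊕ Fin m => v ∈ ends' e').card = deg' v := rfl
    have h3 := even_iff_two_dvd.mp (hdeg'even v)
    have h4 : 2 * (deg' v / 2) = deg' v := Nat.mul_div_cancel' h3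
    omega
  -- restrict to original edges
  refine ⟨fun e => (f (Sum.inl e)).1, fun e => (hfspec (Sum.inl e)).1, fun v => ⟨?_, ?_⟩⟩
  · show (univ.filter fun e : E => (f (Sum.inl e)).1 = v).card
        ≤ ((univ.filter fun e => v ∈ ends e).card + 1) / 2
    have hsplit : hcnt v = (univ.filter fun e : E => (f (Sum.inl e)).1 = v).card
        + (univ.filter fun j : Fin m => (f (Sum.inr j)).1 = v).card := by
      show (univ.filter fun e' : E ⊕ Fin m => (f e').1 = v).card = _
      rw [Finset.card_filter, Finset.card_filter, Finset.card_filter,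
        Fintype.sum_sum_type]
    have h1 := hexact v
    have h2 := hdegsum v
    have h3 := hdummy v
    have hgoal : deg v = (univ.filter fun e => v ∈ ends e).card := rfl
    rw [← hgoal]
    by_cases hv : v ∈ O
    · rw [if_pos hv] at h3; omega
    · rw [if_neg hv] at h3; omega
  · show (univ.filter fun e : E => v ∈ ends e ∧ (f (Sum.inl e)).1 ≠ v).card
        ≤ ((univ.filter fun e => v ∈ ends e).card + 1) / 2
    have htail := htails v
    have hsplit : (univ.filter fun e' : E ⊕ Fin m => v ∈ ends' e' ∧ (f e').1 ≠ v).card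
        = (univ.filter fun e : E => v ∈ ends e ∧ (f (Sum.inl e)).1 ≠ v).card
        + (univ.filter fun j : Fin m => v ∈ ed j ∧ (f (Sum.inr j)).1 ≠ v).card := by
      rw [Finset.card_filter, Finset.card_filter, Finset.card_filter,
        Fintype.sum_sum_type]
      rfl
    have h2 := hdegsum v
    have h3 := hdummy v
    have hgoal : deg v = (univ.filter fun e => v ∈ ends e).card := rfl
    rw [← hgoal]
    by_cases hv : v ∈ O
    · rw [if_pos hv] at h3; omega
    · rw [if_neg hv] at h3; omega

end FrugalAux

section FrugalGlue
open Finset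

private lemma ncard_filter_eq {α : Type*} [Fintype α] (p : α → Prop) [DecidablePred p] :
    {x | p x}.ncard = (univ.filter p).card := by
  rw [Set.ncard_eq_toFinset_card', Set.toFinset_setOf]

private lemma nat_ceil_le {d k u : ℕ} (hk : 0 < k) (h : d ≤ u * k) : (d + k - 1) / k ≤ u := by
  have h3 : d + k - 1 ≤ (k - 1) + u * k := by omega
  have h4 : (d + k - 1) / k ≤ ((k - 1) + u * k) / k := Nat.div_le_div_right h3
  rwa [Nat.add_mul_div_right _ _ hk, Nat.div_eq_of_lt (show k - 1 < k by omega), zero_add] at h4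

private lemma nat_le_mul_ceil {d k : ℕ} (hk : 0 < k) : d ≤ k * ((d + k - 1) / k) := by
  have h1 := Nat.div_add_mod (d + k - 1) k
  have h2 := Nat.mod_lt (d + k - 1) hk
  set P := k * ((d + k - 1) / k) with hP
  omega

/-- Main upper bound: `k = 2s`-frugal choosability from lists of any size `t`
with `degree ≤ 2st`. -/
private theorem frugal_choosable {V E : Type*} [Fintype V] [Fintype E] [DecidableEq V] (G : Multigraph V E)
    (s : ℕ) (hs : 0 < s) (t : ℕ)
    (hdeg : ∀ v : V, (univ.filter fun e => v ∈ G.ends e).card ≤ 2 * (s * t))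
    (L : E → Finset ℤ) (hL : ∀ e, (L e).card = t) :
    ∃ c : E → ℤ, (∀ e, c e ∈ L e) ∧ G.IsFrugalEdgeColoring (2 * s) c := by
  classical
  obtain ⟨hd, hhd, hbal⟩ := exists_balanced_orientation G.ends G.no_loops
  set tl : E → V := fun e => Sym2.Mem.other' (hhd e) with htl
  have htlmem : ∀ e, tl e ∈ G.ends e := fun e => Sym2.other_mem' (hhd e)
  have hspec : ∀ e, s(hd e, tl e) = G.ends e := fun e => Sym2.other_spec' (hhd e)
  have hne : ∀ e, hd e ≠ tl e := by
    intro e h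
    apply G.no_loops e
    rw [← hspec e, h]
    exact Sym2.mk_isDiag_iff.2 rfl
  set D := s * t with hD
  have hD2 : ∀ v, ((univ.filter fun e => v ∈ G.ends e).card + 1) / 2 ≤ D := by
    intro v; have := hdeg v; omega
  have dhd : ∀ v, (univ.filter fun e : E => hd e = v).card ≤ D :=
    fun v => le_trans (hbal v).1 (hD2 v)
  have dtl : ∀ v, (univ.filter fun e : E => tl e = v).card ≤ D := by
    intro v
    have hsub : (univ.filter fun e : E => tl e = v)
        ⊆ (univ.filter fun e => v ∈ G.ends e ∧ hd e ≠ v) := by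
      intro e he
      have h := (mem_filter.1 he).2
      refine mem_filter.2 ⟨mem_univ _, h ▸ htlmem e, ?_⟩
      rw [← h]; exact hne e
    exact le_trans (card_le_card hsub) (le_trans (hbal v).2 (hD2 v))
  set L' : E → Finset (ℤ × ℕ) := fun e => (L e) ×ˢ Finset.range s with hL'
  have hL'card : ∀ e, D ≤ (L' e).card := by
    intro e
    rw [hL', Finset.card_product, hL e, Finset.card_range]
    exact le_of_eq (Nat.mul_comm s t)
  obtain ⟨c', hc'mem, hc'prop⟩ := galvin tl hd D dtl dhd L' hL'card
  refine ⟨fun e => (c' e).1, fun e => (Finset.mem_product.1 (hc'mem e)).1, ?_⟩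
  intro v a
  rw [show {e : E | v ∈ G.ends e ∧ (fun e => (c' e).1) e = a}.ncard
    = (univ.filter fun e => v ∈ G.ends e ∧ (c' e).1 = a).card from ncard_filter_eq _]
  have hsub : (univ.filter fun e => v ∈ G.ends e ∧ (c' e).1 = a)
      ⊆ (univ.filter fun e => hd e = v ∧ (c' e).1 = a)
        ∪ (univ.filter fun e => tl e = v ∧ (c' e).1 = a) := by
    intro e he
    obtain ⟨hv, hca⟩ := (mem_filter.1 he).2
    rw [← hspec e, Sym2.mem_iff] at hv
    rcases hv with h | h
    · exact mem_union_left _ (mem_filter.2 ⟨mem_univ _, h.symm, hca⟩)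
    · exact mem_union_right _ (mem_filter.2 ⟨mem_univ _, h.symm, hca⟩)
  have hb1 : (univ.filter fun e => hd e = v ∧ (c' e).1 = a).card ≤ s := by
    rw [← Finset.card_range s]
    refine Finset.card_le_card_of_injOn (fun e => (c' e).2) (fun e he => ?_)
      (fun e he f hf hef => ?_)
    · exact (Finset.mem_product.1 (hc'mem e)).2
    · by_contra hne'
      obtain ⟨he1, he2⟩ := (mem_filter.1 (mem_coe.1 he)).2
      obtain ⟨hf1, hf2⟩ := (mem_filter.1 (mem_coe.1 hf)).2
      exact hc'prop e f hne' (Or.inr (he1.trans hf1.symm))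
        (Prod.ext (he2.trans hf2.symm) hef)
  have hb2 : (univ.filter fun e => tl e = v ∧ (c' e).1 = a).card ≤ s := by
    rw [← Finset.card_range s]
    refine Finset.card_le_card_of_injOn (fun e => (c' e).2) (fun e he => ?_)
      (fun e he f hf hef => ?_)
    · exact (Finset.mem_product.1 (hc'mem e)).2
    · by_contra hne'
      obtain ⟨he1, he2⟩ := (mem_filter.1 (mem_coe.1 he)).2
      obtain ⟨hf1, hf2⟩ := (mem_filter.1 (mem_coe.1 hf)).2
      exact hc'prop e f hne' (Or.inl (he1.trans hf1.symm))
        (Prod.ext (he2.trans hf2.symm) hef)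
  calc (univ.filter fun e => v ∈ G.ends e ∧ (c' e).1 = a).card
      ≤ _ := card_le_card hsub
    _ ≤ _ := card_union_le _ _
    _ ≤ s + s := Nat.add_le_add hb1 hb2
    _ = 2 * s := by omega

private theorem degree_le_of_frugal {V E α : Type*} [Fintype V] [Fintype E] [DecidableEq V] [DecidableEq α]
    (G : Multigraph V E) (k : ℕ) (c : E → α)
    (hc : G.IsFrugalEdgeColoring k c) (T : Finset α) (hT : ∀ e, c e ∈ T) (v : V) :
    (univ.filter fun e => v ∈ G.ends e).card ≤ T.card * k := by
  classical
  have hsub : (univ.filter fun e => v ∈ G.ends e)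
      ⊆ T.biUnion (fun a => univ.filter fun e => v ∈ G.ends e ∧ c e = a) := by
    intro e he
    exact mem_biUnion.2 ⟨c e, hT e, mem_filter.2 ⟨mem_univ _, (mem_filter.1 he).2, rfl⟩⟩
  calc (univ.filter fun e => v ∈ G.ends e).card
      ≤ _ := card_le_card hsub
    _ ≤ ∑ a ∈ T, (univ.filter fun e => v ∈ G.ends e ∧ c e = a).card := card_biUnion_le
    _ ≤ ∑ _a ∈ T, k := by
        refine Finset.sum_le_sum fun a _ => ?_
        have := hc v a
        rwa [ncard_filter_eq] at this
    _ = T.card * k := by rw [Finset.sum_const, smul_eq_mul]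


/-- For a finite multigraph `G` and an even positive integer `k`,
`χ'_k(G) = ch'_k(G) = ⌈Δ(G)/k⌉` (ceiling written `(Δ + k - 1)/k`). -/
theorem frugal_edge_even {V E : Type*} [Fintype V] [Fintype E] (G : Multigraph V E)
    (k : ℕ) (hk : 0 < k) (hke : Even k) :
    G.frugalChromaticIndex k = (G.maxDegree + k - 1) / k ∧
    G.frugalEdgeChoiceNumber k = (G.maxDegree + k - 1) / k := by
  classical
  obtain ⟨s, hs2⟩ := hke
  have hs : 0 < s := by omega
  set Δ := G.maxDegree with hΔ
  set t₀ := (Δ + k - 1) / k with ht₀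
  have hdegconv : ∀ v, G.degree v = (univ.filter fun e => v ∈ G.ends e).card :=
    fun v => ncard_filter_eq _
  have hdegle : ∀ v, (univ.filter fun e => v ∈ G.ends e).card ≤ Δ := by
    intro v
    rw [← hdegconv v, hΔ]
    exact Finset.le_sup (mem_univ v)
  have hΔt : Δ ≤ k * t₀ := by rw [ht₀]; exact nat_le_mul_ceil hk
  have hdegbound : ∀ v, (univ.filter fun e => v ∈ G.ends e).card ≤ 2 * (s * t₀) := by
    intro v
    have h1 := hdegle v
    have h2 : k * t₀ = 2 * (s * t₀) := by rw [hs2]; ring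
    omega
  have hchoos : ∀ L : E → Finset ℤ, (∀ e, (L e).card = t₀) →
      ∃ c : E → ℤ, (∀ e, c e ∈ L e) ∧ G.IsFrugalEdgeColoring k c := by
    intro L hL
    obtain ⟨c, h1, h2⟩ := frugal_choosable G s hs t₀ hdegbound L hL
    exact ⟨c, h1, by rwa [show 2 * s = k by omega] at h2⟩
  -- upper bound for sup: from a frugal colouring with ≤ u colours, Δ ≤ u * k
  have hmaxle : ∀ {α : Type} [DecidableEq α] (c : E → α) (T : Finset α),
      G.IsFrugalEdgeColoring k c → (∀ e, c e ∈ T) → Δ ≤ T.card * k := by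
    intro α _ c T hc hT
    rw [hΔ]
    unfold Multigraph.maxDegree
    refine Finset.sup_le fun v _ => ?_
    rw [hdegconv v]
    exact degree_le_of_frugal G k c hc T hT v
  constructor
  · -- chromatic index
    apply le_antisymm
    · -- membership: t₀ is achievable
      apply Nat.sInf_le
      obtain ⟨c, hcmem, hcf⟩ := hchoos (fun _ => (Finset.range t₀).image (Nat.cast : ℕ → ℤ))
        (fun _ => by rw [Finset.card_image_of_injective _ Nat.cast_injective, Finset.card_range])
      have hcval : ∀ e, ∃ n : ℕ, n < t₀ ∧ c e = (n : ℤ) := by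
        intro e
        obtain ⟨n, hn, hne⟩ := Finset.mem_image.1 (hcmem e)
        exact ⟨n, Finset.mem_range.1 hn, hne.symm⟩
      refine ⟨fun e => (c e).toNat, fun e => ?_, fun v a => ?_⟩
      · show (c e).toNat < t₀
        obtain ⟨n, hn, hne⟩ := hcval e
        rw [hne]
        simpa using hn
      · have hsub : {e : E | v ∈ G.ends e ∧ (fun e => (c e).toNat) e = a}
            ⊆ {e : E | v ∈ G.ends e ∧ c e = (a : ℤ)} := by
          intro e he
          obtain ⟨h1, h2⟩ := he
          have h2' : (c e).toNat = a := h2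
          obtain ⟨n, _, hne⟩ := hcval e
          refine ⟨h1, ?_⟩
          show c e = (a : ℤ)
          rw [hne] at h2' ⊢
          simp only [Int.toNat_natCast] at h2'
          rw [h2']
        exact le_trans (Set.ncard_le_ncard hsub (Set.toFinite _)) (hcf v (a : ℤ))
    · -- lower bound
      refine le_csInf ?_ ?_
      · obtain ⟨c, hcmem, hcf⟩ := hchoos (fun _ => (Finset.range t₀).image (Nat.cast : ℕ → ℤ))
          (fun _ => by rw [Finset.card_image_of_injective _ Nat.cast_injective, Finset.card_range])
        refine ⟨t₀, fun e => (c e).toNat, fun e => ?_, fun v a => ?_⟩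
        · show (c e).toNat < t₀
          obtain ⟨n, hn, hne⟩ := Finset.mem_image.1 (hcmem e)
          rw [← hne]
          simpa using Finset.mem_range.1 hn
        · have hsub : {e : E | v ∈ G.ends e ∧ (fun e => (c e).toNat) e = a}
              ⊆ {e : E | v ∈ G.ends e ∧ c e = (a : ℤ)} := by
            intro e he
            obtain ⟨h1, h2⟩ := he
            have h2' : (c e).toNat = a := h2
            obtain ⟨n, hn, hne⟩ := Finset.mem_image.1 (hcmem e)
            refine ⟨h1, ?_⟩
            show c e = (a : ℤ)
            rw [← hne] at h2' ⊢
            simp only [Int.toNat_natCast] at h2'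
            rw [h2']
          exact le_trans (Set.ncard_le_ncard hsub (Set.toFinite _)) (hcf v (a : ℤ))
      · rintro n ⟨c, hclt, hcf⟩
        have hT : ∀ e, c e ∈ Finset.range n := fun e => Finset.mem_range.2 (hclt e)
        have := hmaxle c (Finset.range n) hcf hT
        rw [Finset.card_range] at this
        rw [ht₀]
        exact nat_ceil_le hk this
  · -- choice number
    apply le_antisymm
    · exact Nat.sInf_le hchoos
    · refine le_csInf ⟨t₀, hchoos⟩ ?_
      rintro u hu
      obtain ⟨c, hcmem, hcf⟩ := hu (fun _ => (Finset.range u).image (Nat.cast : ℕ → ℤ))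
        (fun _ => by rw [Finset.card_image_of_injective _ Nat.cast_injective, Finset.card_range])
      have := hmaxle c ((Finset.range u).image (Nat.cast : ℕ → ℤ)) hcf hcmem
      rw [Finset.card_image_of_injective _ Nat.cast_injective, Finset.card_range] at this
      rw [ht₀]
      exact nat_ceil_le hk this
end FrugalGlue
end

section
/- For integers m ≥ 1 and ℓ ≥ 0, let T^(m) be the multigraph with three vertices and exactly m parallel edges between each pair of distinct vertices, and let k = 2ℓ + 1. Then in any k-frugal edge colouring of T^(m) each colour is used on at most 3ℓ + 1 edges, and consequently χ'_k(T^(m)) = ⌈3m/(3ℓ + 1)⌉ = ⌈3·Δ(T^(m))/(3k − 1)⌉, where Δ(T^(m)) = 2m. -/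
open SimpleGraph

/-- `TripleMultigraph m`: the multigraph `T^(m)` with three vertices and exactly `m`
parallel edges between each pair of distinct vertices. -/
def TripleMultigraph (m : ℕ) : Multigraph (Fin 3) (Fin 3 × Fin m) where
  ends := fun p => s(p.1 + 1, p.1 + 2)
  no_loops := by
    rintro ⟨i, j⟩
    rw [Sym2.mk_isDiag_iff]
    exact (by decide : ∀ i : Fin 3, ¬ i + 1 = i + 2) i

open Finset

lemma ncardFilter {α : Type*} [Fintype α] (P : α → Prop) [DecidablePred P] :
    {x | P x}.ncard = (Finset.univ.filter P).card := by
  rw [Set.ncard_eq_toFinset_card', Set.toFinset_setOf]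

lemma mem_ends_iff {m : ℕ} (v : Fin 3) (e : Fin 3 × Fin m) :
    v ∈ (TripleMultigraph m).ends e ↔ e.1 ≠ v := by
  show v ∈ s(e.1 + 1, e.1 + 2) ↔ e.1 ≠ v
  rw [Sym2.mem_iff]
  exact (by decide : ∀ i v : Fin 3, (v = i+1 ∨ v = i+2) ↔ i ≠ v) e.1 v

lemma colour_class_le (m ℓ : ℕ) (c : Fin 3 × Fin m → ℕ)
    (h : (TripleMultigraph m).IsFrugalEdgeColoring (2*ℓ+1) c) (a : ℕ) :
    (Finset.univ.filter (fun e : Fin 3 × Fin m => c e = a)).card ≤ 3*ℓ+1 := by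
  set f : Fin 3 → ℕ :=
    fun i => (Finset.univ.filter (fun e : Fin 3 × Fin m => c e = a ∧ e.1 = i)).card with hf
  have htot : (Finset.univ.filter (fun e : Fin 3 × Fin m => c e = a)).card
      = f 0 + f 1 + f 2 := by
    have := Finset.card_eq_sum_card_fiberwise
      (f := Prod.fst) (s := Finset.univ.filter (fun e : Fin 3 × Fin m => c e = a))
      (t := Finset.univ) (fun x _ => Finset.mem_univ _)
    rw [this, Fin.sum_univ_three]
    simp only [hf, Finset.filter_filter]
  have hv : ∀ v : Fin 3, f (v+1) + f (v+2) ≤ 2*ℓ+1 := by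
    intro v
    have h1 := h v a
    have hset : {e : Fin 3 × Fin m | v ∈ (TripleMultigraph m).ends e ∧ c e = a}
        = {e | (c e = a ∧ e.1 = v+1) ∨ (c e = a ∧ e.1 = v+2)} := by
      ext e
      simp only [Set.mem_setOf_eq, mem_ends_iff]
      have : e.1 ≠ v ↔ (e.1 = v+1 ∨ e.1 = v+2) :=
        (by decide : ∀ i v : Fin 3, i ≠ v ↔ (i = v+1 ∨ i = v+2)) e.1 v
      tauto
    rw [hset, ncardFilter, Finset.filter_or, Finset.card_union_of_disjoint] at h1
    · exact h1
    · rw [Finset.disjoint_left]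
      rintro e he1 he2
      simp only [Finset.mem_filter] at he1 he2
      have : v + 1 ≠ v + 2 := (by decide : ∀ v : Fin 3, v + 1 ≠ v + 2) v
      exact this (he1.2.2 ▸ he2.2.2)
  have h0 := hv 0
  have h1 := hv 1
  have h2 := hv 2
  rw [show (0:Fin 3)+1 = 1 by decide, show (0:Fin 3)+2 = 2 by decide] at h0
  rw [show (1:Fin 3)+1 = 2 by decide, show (1:Fin 3)+2 = 0 by decide] at h1
  rw [show (2:Fin 3)+1 = 0 by decide, show (2:Fin 3)+2 = 1 by decide] at h2
  omega

lemma degree_eq (m : ℕ) (v : Fin 3) : (TripleMultigraph m).degree v = 2 * m := by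
  unfold Multigraph.degree
  have : {e : Fin 3 × Fin m | v ∈ (TripleMultigraph m).ends e}
      = {e : Fin 3 × Fin m | e.1 ≠ v} := by
    ext e; exact mem_ends_iff v e
  rw [this, ncardFilter]
  have : (Finset.univ.filter (fun e : Fin 3 × Fin m => e.1 ≠ v))
      = (Finset.univ.filter (fun i : Fin 3 => i ≠ v)) ×ˢ Finset.univ := by
    ext ⟨i, j⟩; simp
  rw [this, Finset.card_product, Finset.card_univ, Fintype.card_fin]
  have h2 : ∀ w : Fin 3, (Finset.univ.filter (fun i : Fin 3 => i ≠ w)).card = 2 := by decide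
  rw [h2 v]

lemma maxDegree_eq (m : ℕ) : (TripleMultigraph m).maxDegree = 2 * m := by
  unfold Multigraph.maxDegree
  rw [Finset.sup_congr rfl (fun v _ => degree_eq m v)]
  exact Finset.sup_const Finset.univ_nonempty _

lemma count_mod_ge (L l r : ℕ) (hr : r < 3) :
    l ≤ ((Finset.Ico L (L + (3*l+1))).filter (fun t => t % 3 = r)).card := by
  have := Finset.card_le_card_of_injOn (s := Finset.range l)
    (t := (Finset.Ico L (L + (3*l+1))).filter (fun t => t % 3 = r))
    (fun u => L + (r + 2*L) % 3 + 3*u)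
    (by intro u hu
        simp only [Finset.mem_coe, Finset.mem_range] at hu
        simp only [Finset.mem_coe, Finset.mem_filter, Finset.mem_Ico]
        omega)
    (by intro u1 _ u2 _ h; simp only [] at h; omega)
  simpa using this

lemma vertex_count (m ℓ : ℕ) (v : Fin 3) (a : ℕ) :
    ((Finset.univ : Finset (Fin 3 × Fin m)).filter
      (fun e => e.1 ≠ v ∧ (3 * e.2.val + e.1.val) / (3*ℓ+1) = a)).card ≤ 2*ℓ+1 := by
  set b := 3*ℓ+1 with hb
  have hbpos : 0 < b := by omega
  have key := Finset.card_le_card_of_injOn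
    (s := (Finset.univ : Finset (Fin 3 × Fin m)).filter
      (fun e => e.1 ≠ v ∧ (3 * e.2.val + e.1.val) / b = a))
    (t := (Finset.Ico (a*b) (a*b + b)).filter (fun t => ¬ t % 3 = v.val))
    (fun e => 3 * e.2.val + e.1.val)
    (by rintro ⟨i, j⟩ he
        simp only [Finset.mem_coe, Finset.mem_filter, Finset.mem_univ, true_and] at he
        obtain ⟨hne, hdiv⟩ := he
        simp only [Finset.mem_coe, Finset.mem_filter, Finset.mem_Ico]
        have h1 := Nat.div_add_mod (3 * j.val + i.val) b
        have h2 := Nat.mod_lt (3 * j.val + i.val) hbpos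
        rw [hdiv] at h1
        have hmc : a * b = b * a := mul_comm a b
        have hi3 : i.val < 3 := i.isLt
        have hvv : i.val ≠ v.val := fun h => hne (Fin.ext h)
        refine ⟨⟨?_, ?_⟩, ?_⟩ <;> omega)
    (by rintro ⟨i1, j1⟩ h1 ⟨i2, j2⟩ h2 h
        simp only [] at h
        have : i1.val < 3 := i1.isLt
        have : i2.val < 3 := i2.isLt
        have hi : i1.val = i2.val := by omega
        have hj : j1.val = j2.val := by omega
        exact Prod.ext (Fin.ext hi) (Fin.ext hj))
  have hsplit := Finset.card_filter_add_card_filter_not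
    (s := Finset.Ico (a*b) (a*b + b)) (p := fun t => t % 3 = v.val)
  have hge := count_mod_ge (a*b) ℓ v.val v.isLt
  rw [Nat.card_Ico] at hsplit
  have : a * b + b - a * b = b := by omega
  rw [this] at hsplit
  rw [← hb] at hge
  omega

/-- For `m ≥ 1`, `ℓ ≥ 0` and `k = 2ℓ + 1`: in any `k`-frugal edge colouring of `T^(m)`
each colour is used on at most `3ℓ + 1` edges; `Δ(T^(m)) = 2m`; and
`χ'_k(T^(m)) = ⌈3m/(3ℓ + 1)⌉ = ⌈3Δ(T^(m))/(3k - 1)⌉`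
(ceilings written `(a + b - 1)/b`). -/
theorem frugal_edge_triple (m ℓ k : ℕ) (hm : 1 ≤ m) (hk : k = 2 * ℓ + 1) :
    (∀ c : Fin 3 × Fin m → ℕ, (TripleMultigraph m).IsFrugalEdgeColoring k c →
        ∀ a : ℕ, {e : Fin 3 × Fin m | c e = a}.ncard ≤ 3 * ℓ + 1) ∧
    (TripleMultigraph m).maxDegree = 2 * m ∧
    (TripleMultigraph m).frugalChromaticIndex k
        = (3 * m + (3 * ℓ + 1) - 1) / (3 * ℓ + 1) ∧
    (3 * m + (3 * ℓ + 1) - 1) / (3 * ℓ + 1)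
        = (3 * (TripleMultigraph m).maxDegree + (3 * k - 1) - 1) / (3 * k - 1) := by
  subst hk
  set b : ℕ := 3 * ℓ + 1 with hbdef
  have hbpos : 0 < b := by omega
  set N : ℕ := (3 * m + b - 1) / b with hNdef
  -- basic div facts about N
  have hdm := Nat.div_add_mod (3 * m + b - 1) b
  have hmlt := Nat.mod_lt (3 * m + b - 1) hbpos
  rw [← hNdef] at hdm
  have hNb : 3 * m ≤ b * N := by omega
  have hmem : ∃ c : Fin 3 × Fin m → ℕ, (∀ e, c e < N) ∧
      (TripleMultigraph m).IsFrugalEdgeColoring (2 * ℓ + 1) c := by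
    refine ⟨fun e => (3 * e.2.val + e.1.val) / b, ?_, ?_⟩
    · rintro ⟨i, j⟩
      have hi : i.val < 3 := i.isLt
      have hj : j.val < m := j.isLt
      rw [Nat.div_lt_iff_lt_mul hbpos]
      have : N * b = b * N := mul_comm _ _
      omega
    · intro v a
      have hset : {e : Fin 3 × Fin m | v ∈ (TripleMultigraph m).ends e ∧
            (3 * e.2.val + e.1.val) / b = a}
          = {e : Fin 3 × Fin m | e.1 ≠ v ∧ (3 * e.2.val + e.1.val) / b = a} := by
        ext e; rw [Set.mem_setOf_eq, Set.mem_setOf_eq, mem_ends_iff]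
      rw [hset, ncardFilter]
      exact vertex_count m ℓ v a
  refine ⟨?_, maxDegree_eq m, ?_, ?_⟩
  · -- part 1
    intro c hc a
    rw [ncardFilter]
    exact colour_class_le m ℓ c hc a
  · -- part 3
    apply le_antisymm
    · -- upper bound: construct colouring
      exact Nat.sInf_le hmem
    · -- lower bound
      apply le_csInf ⟨N, hmem⟩
      rintro n ⟨c, hlt, hfr⟩
      have hcard : (Finset.univ : Finset (Fin 3 × Fin m)).card = 3 * m := by
        simp [Finset.card_univ]
      have hfib := Finset.card_eq_sum_card_fiberwise
        (f := c) (s := (Finset.univ : Finset (Fin 3 × Fin m))) (t := Finset.range n)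
        (fun e _ => Finset.mem_range.mpr (hlt e))
      have hsum : ∑ a ∈ Finset.range n,
          ((Finset.univ : Finset (Fin 3 × Fin m)).filter (fun e => c e = a)).card
          ≤ n * (3 * ℓ + 1) := by
        calc ∑ a ∈ Finset.range n,
            ((Finset.univ : Finset (Fin 3 × Fin m)).filter (fun e => c e = a)).card
            ≤ (Finset.range n).card • (3 * ℓ + 1) :=
              Finset.sum_le_card_nsmul _ _ _ (fun a _ => colour_class_le m ℓ c hfr a)
          _ = n * (3 * ℓ + 1) := by rw [Finset.card_range, smul_eq_mul]
      have h3m : 3 * m ≤ n * b := by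
        rw [hbdef]; rw [hcard] at hfib; omega
      have hlt2 : 3 * m + b - 1 < (n + 1) * b := by
        have : (n + 1) * b = n * b + b := by ring
        omega
      rw [hNdef]
      exact Nat.lt_succ_iff.mp ((Nat.div_lt_iff_lt_mul hbpos).mpr hlt2)
  · -- part 4
    rw [maxDegree_eq,
      show 3 * (2 * ℓ + 1) - 1 = 6 * ℓ + 2 from by omega,
      show 3 * (2 * m) + (6 * ℓ + 2) - 1 = 6 * m + 6 * ℓ + 1 from by omega]
    symm
    apply Nat.div_eq_of_lt_le
    · have e1 : N * (6 * ℓ + 2) = 2 * (b * N) := by rw [hbdef]; ring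
      omega
    · have e2 : (N + 1) * (6 * ℓ + 2) = 2 * (b * N) + 2 * b := by rw [hbdef]; ring
      omega
end
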